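/- arXiv:1902.02473 — 6 statements merged into one kernel-verified Lean document; each statement's English description precedes it below -/
import Mathlib

section
/- Let n be a non-negative integer, let 0 ≤ α < 1, and let β be a positive real number with β ≥ e·(1−α) when n = 0 and β ≥ e^(n−1)·(1−α) when n ≥ 1. If p ∈ H₁, p(z) ≠ 0 for all z ∈ 𝔻 (needed when n ≥ 1), and the function z ↦ 1 + β·z·p′(z)/p(z)^n is subordinate to z ↦ 1 + (1−α)z on 𝔻, then p is subordinate to z ↦ e^z on 𝔻. -/
open Complex Metric intervalIntegral MeasureTheory

set_option maxHeartbeats 800000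


open Complex

noncomputable section

/-- The open unit disk in the complex plane. -/
def unitDisk : Set ℂ := Metric.ball 0 1

/-- `f` is subordinate to `g` on the open unit disk: there is an analytic
Schwarz function `w` with `w 0 = 0`, `‖w z‖ < 1` on the disk, and `f = g ∘ w`. -/
def Subord (f g : ℂ → ℂ) : Prop :=
  ∃ w : ℂ → ℂ, DifferentiableOn ℂ w unitDisk ∧ w 0 = 0 ∧
    (∀ z ∈ unitDisk, ‖w z‖ < 1) ∧ ∀ z ∈ unitDisk, f z = g (w z)

lemma exists_primitive {f : ℂ → ℂ} (hf : DifferentiableOn ℂ f (ball (0:ℂ) 1)) :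
    ∃ g : ℂ → ℂ, g 0 = 0 ∧ ∀ z ∈ ball (0:ℂ) 1, HasDerivAt g (f z) z := by
  have hfc : ContinuousOn f (ball (0:ℂ) 1) := hf.continuousOn
  have hfa : AnalyticOnNhd ℂ f (ball (0:ℂ) 1) := hf.analyticOnNhd isOpen_ball
  have hf' : DifferentiableOn ℂ (deriv f) (ball (0:ℂ) 1) := hfa.deriv.differentiableOn
  have hf'c : ContinuousOn (deriv f) (ball (0:ℂ) 1) := hf'.continuousOn
  set g : ℂ → ℂ := fun z => ∫ t in (0:ℝ)..1, z * f ((t:ℂ) * z) with hg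
  refine ⟨g, by simp [hg], ?_⟩
  intro x₀ hx₀
  rw [mem_ball_zero_iff] at hx₀
  set r : ℝ := ‖x₀‖ with hr
  have hr0 : 0 ≤ r := norm_nonneg _
  set ε : ℝ := (1 - r)/2 with hε
  have hεpos : 0 < ε := by rw [hε]; linarith
  set ρ : ℝ := (1 + r)/2 with hρ
  have hρ1 : ρ < 1 := by rw [hρ]; linarith
  have hρ0 : 0 ≤ ρ := by positivity
  have hball : closedBall (0:ℂ) ρ ⊆ ball (0:ℂ) 1 := closedBall_subset_ball hρ1
  -- membership facts
  have hmem : ∀ x ∈ ball x₀ ε, ∀ t : ℝ, t ∈ Set.uIcc (0:ℝ) 1 → (t:ℂ) * x ∈ closedBall (0:ℂ) ρ := by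
    intro x hx t ht
    rw [Set.uIcc_of_le (by norm_num)] at ht
    rw [mem_ball, dist_eq_norm] at hx
    have h1 : ‖x‖ ≤ ‖x - x₀‖ + ‖x₀‖ := by simpa using norm_add_le (x - x₀) x₀
    have hxn : ‖x‖ ≤ ρ := by rw [hρ]; linarith [hx]
    rw [mem_closedBall_zero_iff, norm_mul, Complex.norm_real, Real.norm_eq_abs,
      _root_.abs_of_nonneg ht.1]
    calc t * ‖x‖ ≤ 1 * ρ := by
          apply mul_le_mul ht.2 hxn (norm_nonneg _) zero_le_one
      _ = ρ := one_mul ρ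
  -- bounds on f and deriv f on the closed ball
  obtain ⟨C, hC⟩ := (isCompact_closedBall (0:ℂ) ρ).exists_bound_of_continuousOn
    (hfc.mono hball)
  obtain ⟨C', hC'⟩ := (isCompact_closedBall (0:ℂ) ρ).exists_bound_of_continuousOn
    (hf'c.mono hball)
  have hC0 : 0 ≤ C := le_trans (norm_nonneg _) (hC 0 (mem_closedBall_self hρ0))
  have hC'0 : 0 ≤ C' := le_trans (norm_nonneg _) (hC' 0 (mem_closedBall_self hρ0))
  -- continuity of the maps t ↦ x * f (t x)
  have hcont : ∀ x ∈ ball x₀ ε, ContinuousOn (fun t : ℝ => x * f ((t:ℂ) * x)) (Set.uIcc (0:ℝ) 1) := by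
    intro x hx
    apply ContinuousOn.mul continuousOn_const
    apply hfc.comp (by fun_prop)
    intro t ht
    exact hball (hmem x hx t ht)
  have hx₀mem : x₀ ∈ ball x₀ ε := mem_ball_self hεpos
  set F' : ℂ → ℝ → ℂ := fun x t => f ((t:ℂ) * x) + x * (deriv f ((t:ℂ) * x) * (t:ℂ)) with hF'
  have hcont' : ContinuousOn (fun t : ℝ => F' x₀ t) (Set.uIcc (0:ℝ) 1) := by
    have h1 : ContinuousOn (fun t : ℝ => (t:ℂ) * x₀) (Set.uIcc (0:ℝ) 1) := by fun_prop
    have hmaps : ∀ t ∈ Set.uIcc (0:ℝ) 1, (t:ℂ) * x₀ ∈ ball (0:ℂ) 1 :=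
      fun t ht => hball (hmem x₀ hx₀mem t ht)
    exact ((hfc.comp h1 hmaps).add (continuousOn_const.mul
      (((hf'c.comp h1 hmaps)).mul (by fun_prop))))
  -- the derivative in x of x ↦ x * f(t x)
  have hdiff : ∀ t : ℝ, t ∈ Set.uIcc (0:ℝ) 1 → ∀ x ∈ ball x₀ ε,
      HasDerivAt (fun y : ℂ => y * f ((t:ℂ) * y)) (F' x t) x := by
    intro t ht x hx
    have hmem' : (t:ℂ) * x ∈ ball (0:ℂ) 1 := hball (hmem x hx t ht)
    have hfd : HasDerivAt f (deriv f ((t:ℂ) * x)) ((t:ℂ) * x) :=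
      (hf.differentiableAt (isOpen_ball.mem_nhds hmem')).hasDerivAt
    have hinner : HasDerivAt (fun y : ℂ => (t:ℂ) * y) (t:ℂ) x := by
      simpa using (hasDerivAt_id x).const_mul (t:ℂ)
    have h2 : HasDerivAt (fun y : ℂ => f ((t:ℂ) * y)) (deriv f ((t:ℂ) * x) * (t:ℂ)) x :=
      HasDerivAt.comp x hfd hinner
    have := (hasDerivAt_id x).mul h2
    simpa [hF', add_comm, Pi.mul_def] using this
  -- differentiation under the integral sign
  have key := intervalIntegral.hasDerivAt_integral_of_dominated_loc_of_deriv_le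
    (F := fun x t => x * f ((t:ℂ) * x)) (F' := F') (x₀ := x₀) (a := 0) (b := 1)
    (μ := volume) (bound := fun _ => C + C') (ball_mem_nhds x₀ hεpos)
    ?_ ?_ ?_ ?_ ?_ ?_
  · obtain ⟨-, hkey⟩ := key
    -- identify the integral with f x₀ via FTC
    have hFTC : (∫ t in (0:ℝ)..1, F' x₀ t) = f x₀ := by
      have hde : ∀ t ∈ Set.uIcc (0:ℝ) 1,
          HasDerivAt (fun s : ℝ => (s:ℂ) * f ((s:ℂ) * x₀)) (F' x₀ t) t := by
        intro t ht
        have hmem' : (t:ℂ) * x₀ ∈ ball (0:ℂ) 1 := hball (hmem x₀ hx₀mem t ht)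
        have hfd : HasDerivAt f (deriv f ((t:ℂ) * x₀)) ((t:ℂ) * x₀) :=
          (hf.differentiableAt (isOpen_ball.mem_nhds hmem')).hasDerivAt
        have hinner : HasDerivAt (fun y : ℂ => y * x₀) x₀ (t:ℂ) := by
          simpa using (hasDerivAt_id (t:ℂ)).mul_const x₀
        have h2 : HasDerivAt (fun y : ℂ => f (y * x₀)) (deriv f ((t:ℂ) * x₀) * x₀) (t:ℂ) :=
          HasDerivAt.comp (t:ℂ) hfd hinner
        have h3 : HasDerivAt (fun y : ℂ => y * f (y * x₀))
            (1 * f ((t:ℂ) * x₀) + (t:ℂ) * (deriv f ((t:ℂ) * x₀) * x₀)) (t:ℂ) :=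
          (hasDerivAt_id (t:ℂ)).mul h2
        have h4 := h3.comp_ofReal
        convert h4 using 1
        rw [hF']; ring
      have hint : IntervalIntegrable (F' x₀) volume 0 1 := hcont'.intervalIntegrable
      have := intervalIntegral.integral_eq_sub_of_hasDerivAt hde hint
      rw [this]; push_cast; simp
    rw [hFTC] at hkey
    exact hkey
  · -- hF_meas
    filter_upwards [isOpen_ball.mem_nhds hx₀mem] with x hx
    exact ((hcont x hx).mono (by rw [Set.uIcc_of_le (zero_le_one), Set.uIoc_of_le zero_le_one]; exact Set.Ioc_subset_Icc_self)).aestronglyMeasurable measurableSet_uIoc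
  · exact (hcont x₀ hx₀mem).intervalIntegrable
  · exact (hcont'.mono (by rw [Set.uIcc_of_le (zero_le_one), Set.uIoc_of_le zero_le_one]; exact Set.Ioc_subset_Icc_self)).aestronglyMeasurable measurableSet_uIoc
  · -- bound
    refine Filter.Eventually.of_forall (fun t ht x hx => ?_)
    have ht' : t ∈ Set.uIcc (0:ℝ) 1 := by
      rw [Set.uIcc_of_le zero_le_one]
      rw [Set.uIoc_of_le zero_le_one] at ht
      exact Set.Ioc_subset_Icc_self ht
    have hmemc := hmem x hx t ht'
    have hxle : ‖x‖ ≤ 1 := by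
      have h1 : ‖x‖ ≤ ‖x - x₀‖ + ‖x₀‖ := by simpa using norm_add_le (x - x₀) x₀
      rw [mem_ball, dist_eq_norm] at hx
      rw [hε] at hx; linarith
    have htle : |t| ≤ 1 := by
      rw [Set.uIoc_of_le zero_le_one] at ht
      rw [_root_.abs_of_nonneg ht.1.le]; exact ht.2
    calc ‖F' x t‖ ≤ ‖f ((t:ℂ) * x)‖ + ‖x * (deriv f ((t:ℂ) * x) * (t:ℂ))‖ := norm_add_le _ _
      _ ≤ C + C' := by
          gcongr
          · exact hC _ hmemc
          · rw [norm_mul, norm_mul, Complex.norm_real, Real.norm_eq_abs]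
            calc ‖x‖ * (‖deriv f ((t:ℂ) * x)‖ * |t|) ≤ 1 * (C' * 1) := by
                  apply mul_le_mul hxle _ (by positivity) zero_le_one
                  exact mul_le_mul (hC' _ hmemc) htle (abs_nonneg _) hC'0
              _ = C' := by ring
  · exact intervalIntegrable_const
  · refine Filter.Eventually.of_forall (fun t ht x hx => ?_)
    apply hdiff t _ x hx
    rw [Set.uIcc_of_le zero_le_one]
    rw [Set.uIoc_of_le zero_le_one] at ht
    exact Set.Ioc_subset_Icc_self ht

lemma exists_log {p : ℂ → ℂ} (hp : DifferentiableOn ℂ p unitDisk) (hp0 : p 0 = 1)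
    (hpne : ∀ z ∈ unitDisk, p z ≠ 0) :
    ∃ g : ℂ → ℂ, g 0 = 0 ∧ (∀ z ∈ unitDisk, HasDerivAt g (deriv p z / p z) z) ∧
      ∀ z ∈ unitDisk, Complex.exp (g z) = p z := by
  have hUD : unitDisk = ball (0:ℂ) 1 := rfl
  have hpd : DifferentiableOn ℂ (deriv p) unitDisk :=
    ((hp.analyticOnNhd (hUD ▸ isOpen_ball)).deriv).differentiableOn
  have hf : DifferentiableOn ℂ (fun z => deriv p z / p z) (ball (0:ℂ) 1) :=
    (hUD ▸ hpd.div hp hpne)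
  obtain ⟨g, hg0, hgd⟩ := exists_primitive hf
  refine ⟨g, hg0, fun z hz => hgd z hz, ?_⟩
  -- h := p * exp (-g) has zero derivative on the disk
  have hopen : IsOpen unitDisk := hUD ▸ isOpen_ball
  have hder : ∀ z ∈ unitDisk, HasDerivWithinAt (fun z => p z * Complex.exp (-g z))
      ((0 : ℂ → ℂ) z) unitDisk z := by
    intro z hz
    have hpz : HasDerivAt p (deriv p z) z :=
      (hp.differentiableAt (hopen.mem_nhds hz)).hasDerivAt
    have hgz : HasDerivAt g (deriv p z / p z) z := hgd z hz
    have hez : HasDerivAt (fun z => Complex.exp (-g z))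
        (Complex.exp (-g z) * (-(deriv p z / p z))) z := hgz.neg.cexp
    have := hpz.mul hez
    have hzero : deriv p z * Complex.exp (-g z)
        + p z * (Complex.exp (-g z) * (-(deriv p z / p z))) = 0 := by
      field_simp [hpne z hz]
      ring
    rw [hzero] at this
    exact this.hasDerivWithinAt
  have hconst : ∀ z ∈ unitDisk, p z * Complex.exp (-g z) = 1 := by
    intro z hz
    have h0 : (0:ℂ) ∈ unitDisk := by
      rw [hUD, mem_ball_zero_iff]; norm_num
    have := (convex_ball (0:ℂ) 1).norm_image_sub_le_of_norm_hasDerivWithin_le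
      (f := fun z => p z * Complex.exp (-g z)) (f' := (0 : ℂ → ℂ)) (C := 0)
      (hUD ▸ hder) (fun x _ => by simp) (hUD ▸ h0) (hUD ▸ hz)
    simp only [zero_mul, norm_le_zero_iff, sub_eq_zero] at this
    rw [this, hp0, hg0]
    simp
  intro z hz
  have := hconst z hz
  rw [Complex.exp_neg] at this
  field_simp at this
  rw [this]

theorem stmt_0 (n : ℕ) (α β : ℝ) (hα0 : 0 ≤ α) (hα1 : α < 1) (hβpos : 0 < β)
    (hβ0 : n = 0 → Real.exp 1 * (1 - α) ≤ β)
    (hβ1 : 1 ≤ n → Real.exp ((n : ℝ) - 1) * (1 - α) ≤ β)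
    (p : ℂ → ℂ) (hp : DifferentiableOn ℂ p unitDisk) (hp0 : p 0 = 1)
    (hpne : ∀ z ∈ unitDisk, p z ≠ 0)
    (hsub : Subord (fun z => 1 + (β : ℂ) * z * deriv p z / (p z) ^ n)
      (fun z => 1 + ((1 : ℂ) - (α : ℂ)) * z)) :
    Subord p Complex.exp := by
  have hUD : unitDisk = ball (0:ℂ) 1 := rfl
  have hopen : IsOpen unitDisk := hUD ▸ isOpen_ball
  have h0mem : (0:ℂ) ∈ unitDisk := by rw [hUD, mem_ball_zero_iff]; norm_num
  set c₀ : ℝ := (1 - α) / β with hc₀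
  have hc₀pos : 0 < c₀ := div_pos (by linarith) hβpos
  obtain ⟨w, hwd, hw0, hw1, hweq⟩ := hsub
  -- Schwarz lemma for w
  have hws : ∀ z ∈ unitDisk, ‖w z‖ ≤ ‖z‖ := by
    intro z hz
    have := Complex.norm_le_norm_of_mapsTo_ball (hUD ▸ hwd)
      (fun x hx => mem_closedBall_zero_iff.2 (hw1 x (hUD ▸ hx)).le) hw0
      (show ‖z‖ < 1 from by rw [← mem_ball_zero_iff, ← hUD]; exact hz)
    simpa using this
  -- the basic identity
  have heq : ∀ z ∈ unitDisk, (β : ℂ) * z * (deriv p z / (p z) ^ n)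
      = ((1 : ℂ) - (α : ℂ)) * w z := by
    intro z hz
    have h := hweq z hz
    have : (β : ℂ) * z * deriv p z / (p z) ^ n = ((1 : ℂ) - (α : ℂ)) * w z := by
      have h2 := h; field_simp at h2 ⊢; linear_combination h
    rw [← this]; ring
  -- the bound on deriv p / p ^ n
  have hφ : ∀ z ∈ unitDisk, ‖deriv p z / (p z) ^ n‖ ≤ c₀ := by
    have hφ' : ∀ z ∈ unitDisk, z ≠ 0 → ‖deriv p z / (p z) ^ n‖ ≤ c₀ := by
      intro z hz hz0
      have h := heq z hz
      have hn : β * ‖z‖ * ‖deriv p z / (p z) ^ n‖ = (1 - α) * ‖w z‖ := by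
        have := congrArg norm h
        simpa [norm_mul, Complex.norm_real, abs_of_pos hβpos,
          ← Complex.ofReal_one, ← Complex.ofReal_sub,
          abs_of_pos (show (0:ℝ) < 1 - α by linarith), mul_assoc] using this
      have hzpos : 0 < ‖z‖ := norm_pos_iff.2 hz0
      have h2 : β * ‖z‖ * ‖deriv p z / (p z) ^ n‖ ≤ (1 - α) * ‖z‖ := by
        rw [hn]
        exact mul_le_mul_of_nonneg_left (hws z hz) (by linarith)
      rw [hc₀, le_div_iff₀ hβpos]
      nlinarith [h2, hzpos]
    intro z hz
    rcases eq_or_ne z 0 with rfl | hz0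
    · -- continuity argument at 0
      have hpd : DifferentiableOn ℂ (deriv p) unitDisk :=
        ((hp.analyticOnNhd hopen).deriv).differentiableOn
      have hcont : ContinuousAt (fun z => deriv p z / (p z) ^ n) 0 := by
        apply ContinuousAt.div
        · exact (hpd.differentiableAt (hopen.mem_nhds h0mem)).continuousAt
        · exact ((hp.differentiableAt (hopen.mem_nhds h0mem)).continuousAt).pow n
        · exact pow_ne_zero n (hpne 0 h0mem)
      have hnb : ∀ᶠ x in nhdsWithin (0:ℂ) {(0:ℂ)}ᶜ, ‖deriv p x / (p x) ^ n‖ ≤ c₀ := by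
        have hmem : ∀ᶠ x in nhdsWithin (0:ℂ) {(0:ℂ)}ᶜ, x ∈ unitDisk :=
          eventually_nhdsWithin_of_eventually_nhds (hopen.eventually_mem h0mem)
        filter_upwards [hmem, self_mem_nhdsWithin] with x hx hx0
        exact hφ' x hx hx0
      have htend : Filter.Tendsto (fun x => ‖deriv p x / (p x) ^ n‖)
          (nhdsWithin (0:ℂ) {(0:ℂ)}ᶜ) (nhds ‖deriv p 0 / (p 0) ^ n‖) :=
        (hcont.norm.continuousWithinAt).tendsto
      exact le_of_tendsto htend hnb
    · exact hφ' z hz hz0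
  -- the key bound on the logarithmic derivative
  have hb : ∀ z ∈ unitDisk, ‖deriv p z / p z‖ ≤ 1 := by
    rcases n with _ | m
    · -- case n = 0
      have hβ := hβ0 rfl
      have he : (0:ℝ) < Real.exp 1 := Real.exp_pos 1
      have he2 : (2:ℝ) ≤ Real.exp 1 := by nlinarith [Real.add_one_le_exp (1:ℝ)]
      have hc₀e : c₀ ≤ (Real.exp 1)⁻¹ := by
        rw [hc₀, div_le_iff₀ hβpos]
        have h1 : (Real.exp 1)⁻¹ * (Real.exp 1 * (1 - α)) ≤ (Real.exp 1)⁻¹ * β :=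
          mul_le_mul_of_nonneg_left hβ (by positivity)
        rw [← mul_assoc, inv_mul_cancel₀ he.ne', one_mul] at h1
        linarith [mul_comm ((Real.exp 1)⁻¹) β]
      have hc₀half : c₀ ≤ 1/2 := by
        have : (Real.exp 1)⁻¹ ≤ 1/2 := by
          rw [inv_le_comm₀ he (by norm_num)]
          linarith
        linarith
      have hφ0 : ∀ x ∈ unitDisk, ‖deriv p x‖ ≤ c₀ := by
        intro x hx
        have := hφ x hx
        simpa using this
      have hpb : ∀ z ∈ unitDisk, ‖p z - 1‖ ≤ c₀ * ‖z‖ := by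
        intro z hz
        have := (convex_ball (0:ℂ) 1).norm_image_sub_le_of_norm_hasDerivWithin_le
          (f := p) (f' := deriv p) (C := c₀)
          (fun x hx => ((hp.differentiableAt (hopen.mem_nhds (hUD ▸ hx))).hasDerivAt).hasDerivWithinAt)
          (fun x hx => hφ0 x (hUD ▸ hx)) (hUD ▸ h0mem) (hUD ▸ hz)
        simpa [hp0] using this
      intro z hz
      have hzn : ‖z‖ < 1 := by rw [hUD, mem_ball_zero_iff] at hz; exact hz
      have h1 : ‖p z - 1‖ ≤ c₀ := by
        have := hpb z hz
        nlinarith [norm_nonneg (p z - 1)]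
      have hlow : 1 - c₀ ≤ ‖p z‖ := by
        have h2 : ‖(1:ℂ)‖ - ‖p z‖ ≤ ‖(1:ℂ) - p z‖ := norm_sub_norm_le _ _
        rw [norm_sub_rev] at h2
        simp only [norm_one] at h2
        linarith
      rw [norm_div, div_le_one (by linarith)]
      calc ‖deriv p z‖ ≤ c₀ := hφ0 z hz
        _ ≤ 1 - c₀ := by linarith
        _ ≤ ‖p z‖ := hlow
    · -- case n = m + 1
      have hβ := hβ1 (Nat.succ_le_succ (Nat.zero_le m))
      set E : ℝ := Real.exp m with hEdef
      have hE : (m:ℝ) + 1 ≤ E := Real.add_one_le_exp m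
      have hEpos : 0 < E := Real.exp_pos _
      have hβ' : E * (1 - α) ≤ β := by
        have : ((m+1 : ℕ):ℝ) - 1 = (m:ℝ) := by push_cast; ring
        rwa [this] at hβ
      have hc₀E : c₀ ≤ E⁻¹ := by
        rw [hc₀, div_le_iff₀ hβpos]
        have h1 : E⁻¹ * (E * (1 - α)) ≤ E⁻¹ * β :=
          mul_le_mul_of_nonneg_left hβ' (by positivity)
        rw [← mul_assoc, inv_mul_cancel₀ hEpos.ne', one_mul] at h1
        linarith [mul_comm E⁻¹ β]
      set Q : ℂ → ℂ := fun z => ((p z) ^ m)⁻¹ with hQdef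
      have hQd : ∀ z ∈ unitDisk, HasDerivAt Q
          (-(m:ℂ) * (deriv p z / (p z) ^ (m+1))) z := by
        intro z hz
        have hpz : HasDerivAt p (deriv p z) z :=
          (hp.differentiableAt (hopen.mem_nhds hz)).hasDerivAt
        have h1 : HasDerivAt Q (-(↑m * p z ^ (m - 1) * deriv p z) / (p z ^ m) ^ 2) z :=
          (hpz.pow m).inv (pow_ne_zero m (hpne z hz))
        convert h1 using 1
        rcases Nat.eq_zero_or_pos m with rfl | hm
        · simp
        · have e1 : (p z ^ m)^2 = p z ^ (m-1) * p z ^ (m+1) := by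
            rw [← pow_mul, ← pow_add]
            congr 1
            omega
          rw [e1]
          have h2 : p z ^ (m-1) ≠ 0 := pow_ne_zero _ (hpne z hz)
          have h3 : p z ^ (m+1) ≠ 0 := pow_ne_zero _ (hpne z hz)
          field_simp
      have hQ0 : Q 0 = 1 := by simp [hQdef, hp0]
      have hQbound : ∀ x ∈ unitDisk, ‖-(m:ℂ) * (deriv p x / (p x) ^ (m+1))‖ ≤ (m:ℝ)/E := by
        intro x hx
        rw [norm_mul, norm_neg]
        have hm : ‖((m:ℕ):ℂ)‖ = (m:ℝ) := by
          simp
        rw [hm]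
        calc (m:ℝ) * ‖deriv p x / (p x) ^ (m+1)‖ ≤ (m:ℝ) * E⁻¹ := by
              apply mul_le_mul_of_nonneg_left _ (Nat.cast_nonneg m)
              exact le_trans (hφ x hx) hc₀E
          _ = (m:ℝ)/E := by rw [div_eq_mul_inv]
      have hQb : ∀ z ∈ unitDisk, ‖Q z - 1‖ ≤ ((m:ℝ)/E) * ‖z‖ := by
        intro z hz
        have := (convex_ball (0:ℂ) 1).norm_image_sub_le_of_norm_hasDerivWithin_le
          (f := Q) (f' := fun x => -(m:ℂ) * (deriv p x / (p x) ^ (m+1))) (C := (m:ℝ)/E)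
          (fun x hx => (hQd x (hUD ▸ hx)).hasDerivWithinAt)
          (fun x hx => hQbound x (hUD ▸ hx)) (hUD ▸ h0mem) (hUD ▸ hz)
        simpa [hQ0] using this
      intro z hz
      have hzn : ‖z‖ < 1 := by rw [hUD, mem_ball_zero_iff] at hz; exact hz
      have hmE : 0 ≤ (m:ℝ)/E := by positivity
      have h1 : ‖Q z - 1‖ ≤ (m:ℝ)/E := by
        have := hQb z hz
        nlinarith [norm_nonneg (Q z - 1)]
      have hQlow : 1 - (m:ℝ)/E ≤ ‖Q z‖ := by
        have h2 : ‖(1:ℂ)‖ - ‖Q z‖ ≤ ‖(1:ℂ) - Q z‖ := norm_sub_norm_le _ _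
        rw [norm_sub_rev] at h2
        simp only [norm_one] at h2
        linarith
      have hinvlow : E⁻¹ ≤ 1 - (m:ℝ)/E := by
        rw [inv_eq_one_div]
        rw [div_le_iff₀ hEpos, sub_mul, div_mul_cancel₀ _ hEpos.ne']
        linarith
      have hQpos : 0 < ‖Q z‖ := lt_of_lt_of_le (by positivity) (le_trans hinvlow hQlow)
      have hkey : ‖deriv p z / p z‖ * ‖Q z‖ = ‖deriv p z / (p z) ^ (m+1)‖ := by
        rw [← norm_mul]
        congr 1
        rw [hQdef]
        have hpz := hpne z hz
        field_simp
        ring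
      have hle : ‖deriv p z / (p z) ^ (m+1)‖ ≤ ‖Q z‖ :=
        le_trans (le_trans (hφ z hz) hc₀E) (le_trans hinvlow hQlow)
      nlinarith [hkey, hle, hQpos, norm_nonneg (deriv p z / p z)]
  -- construct the logarithm and conclude
  obtain ⟨g, hg0, hgd, hge⟩ := exists_log hp hp0 hpne
  refine ⟨g, fun z hz => (hgd z hz).differentiableAt.differentiableWithinAt, hg0, ?_, ?_⟩
  · intro z hz
    have hzn : ‖z‖ < 1 := by rw [hUD, mem_ball_zero_iff] at hz; exact hz
    have := (convex_ball (0:ℂ) 1).norm_image_sub_le_of_norm_hasDerivWithin_le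
      (f := g) (f' := fun x => deriv p x / p x) (C := 1)
      (fun x hx => (hgd x (hUD ▸ hx)).hasDerivWithinAt)
      (fun x hx => hb x (hUD ▸ hx)) (hUD ▸ h0mem) (hUD ▸ hz)
    rw [hg0] at this
    simp only [sub_zero, one_mul] at this
    linarith
  · intro z hz
    exact (hge z hz).symm
end
end

section
/- Let n be a non-negative integer and let β be a real number with β ≥ 2·e^n. If p ∈ H₁, p(z) ≠ 0 for all z ∈ 𝔻, and the function z ↦ 1 + β·z·p′(z)/p(z)^(n+1) is subordinate to z ↦ (2+z)/(2−z) on 𝔻, then p is subordinate to z ↦ e^z on 𝔻. -/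
open Complex

noncomputable section

/-- chord bound for the convex function `x ↦ e^{-n} e^{n x}` on `[0,1]`. -/
lemma chord_bound (n : ℕ) {x : ℝ} (h0 : 0 ≤ x) (h1 : x ≤ 1) :
    Real.exp (-(n : ℝ)) * Real.exp ((n : ℝ) * x)
      ≤ Real.exp (-(n : ℝ)) + (1 - Real.exp (-(n : ℝ))) * x := by
  have h := convexOn_exp.2 (Set.mem_univ (0 : ℝ)) (Set.mem_univ ((n : ℝ)))
      (by linarith : (0 : ℝ) ≤ 1 - x) h0 (by ring)
  simp only [smul_eq_mul, mul_zero, zero_add, Real.exp_zero, mul_one] at h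
  have hA : Real.exp (-(n : ℝ)) * Real.exp ((n : ℝ)) = 1 := by
    rw [← Real.exp_add]; simp
  have hApos : (0 : ℝ) < Real.exp (-(n : ℝ)) := Real.exp_pos _
  have h' := mul_le_mul_of_nonneg_left h hApos.le
  rw [mul_comm (n : ℝ) x] at *
  nlinarith

lemma gronwallBound_mono' {Kp ε t t' : ℝ} (hK : 0 ≤ Kp) (hε : 0 ≤ ε) (ht : t ≤ t') :
    gronwallBound 0 Kp ε t ≤ gronwallBound 0 Kp ε t' := by
  unfold gronwallBound
  split_ifs with h
  · nlinarith
  · have hK' : 0 < Kp := lt_of_le_of_ne hK (Ne.symm h)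
    have h1 : Real.exp (Kp * t) ≤ Real.exp (Kp * t') := Real.exp_le_exp.2 (by nlinarith)
    have hd : 0 ≤ ε / Kp := div_nonneg hε hK'.le
    nlinarith

lemma gronwallBound_strictMono {Kp ε t t' : ℝ} (hK : 0 ≤ Kp) (hε : 0 < ε) (ht : t < t') :
    gronwallBound 0 Kp ε t < gronwallBound 0 Kp ε t' := by
  unfold gronwallBound
  split_ifs with h
  · nlinarith
  · have hK' : 0 < Kp := lt_of_le_of_ne hK (Ne.symm h)
    have h1 : Real.exp (Kp * t) < Real.exp (Kp * t') := Real.exp_lt_exp.2 (by nlinarith)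
    have hd : 0 < ε / Kp := div_pos hε hK'
    nlinarith

lemma G_lt_one (n : ℕ) {r : ℝ} (hr0 : 0 ≤ r) (hr1 : r < 1) :
    gronwallBound 0 ((1 - Real.exp (-(n : ℝ))) * r) (Real.exp (-(n : ℝ)) * r) 1 < 1 := by
  set A := Real.exp (-(n : ℝ)) with hA
  have hA0 : 0 < A := Real.exp_pos _
  have hA1 : A ≤ 1 := by
    rw [hA, ← Real.exp_zero]
    exact Real.exp_le_exp.2 (neg_nonpos.mpr (Nat.cast_nonneg n))
  unfold gronwallBound
  split_ifs with h
  · nlinarith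
  · have hKr : 0 < (1 - A) * r :=
      lt_of_le_of_ne (mul_nonneg (by linarith) hr0) (Ne.symm h)
    have hK : 0 < 1 - A := by
      by_contra h'; push_neg at h'; nlinarith
    have hrpos : 0 < r := by
      by_contra h'; push_neg at h'; nlinarith
    have h1 : Real.exp ((1 - A) * r * 1) < Real.exp (1 - A) :=
      Real.exp_lt_exp.2 (by nlinarith)
    have h2 : A * Real.exp (1 - A) ≤ 1 := by
      have h3 := Real.add_one_le_exp (-(1 - A))
      rw [Real.exp_neg] at h3
      have hE : 0 < Real.exp (1 - A) := Real.exp_pos _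
      have h4 : A ≤ (Real.exp (1 - A))⁻¹ := by linarith
      calc A * Real.exp (1 - A) ≤ (Real.exp (1 - A))⁻¹ * Real.exp (1 - A) :=
            mul_le_mul_of_nonneg_right h4 hE.le
        _ = 1 := inv_mul_cancel₀ hE.ne'
    have hdiv : A * r / ((1 - A) * r) = A / (1 - A) := by
      rw [mul_comm A r, mul_comm (1 - A) r, mul_div_mul_left _ _ hrpos.ne']
    rw [hdiv, zero_mul, zero_add, div_mul_eq_mul_div, div_lt_one hK]
    nlinarith [mul_lt_mul_of_pos_left h1 hA0]

lemma exp_re_pos' {v : ℂ} (h : |v.im| < Real.pi / 2) : 0 < (Complex.exp v).re := by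
  rw [Complex.exp_re]
  have hc : 0 < Real.cos v.im :=
    Real.cos_pos_of_mem_Ioo ⟨by linarith [(abs_lt.1 h).1], (abs_lt.1 h).2⟩
  positivity

lemma one_lt_half_pi : (1 : ℝ) < Real.pi / 2 := by
  have := Real.pi_gt_three; linarith

/-- Key analytic lemma: if `‖p'‖ ≤ e^{-n} ‖p‖^{n+1}` on the unit disk, `p 0 = 1` and `p ≠ 0`,
then `‖log (p z)‖ < 1` on the disk. -/
lemma key_bound (n : ℕ) (p : ℂ → ℂ) (hp : DifferentiableOn ℂ p (Metric.ball 0 1))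
    (hp0 : p 0 = 1) (hpne : ∀ z ∈ Metric.ball (0 : ℂ) 1, p z ≠ 0)
    (hq : ∀ z ∈ Metric.ball (0 : ℂ) 1,
      ‖deriv p z‖ ≤ Real.exp (-(n : ℝ)) * ‖p z‖ ^ (n + 1)) :
    ∀ z ∈ Metric.ball (0 : ℂ) 1, ‖Complex.log (p z)‖ < 1 := by
  intro z hz
  set A : ℝ := Real.exp (-(n : ℝ)) with hAdef
  have hA0 : 0 < A := Real.exp_pos _
  have hA1 : A ≤ 1 := by
    rw [hAdef, ← Real.exp_zero]
    exact Real.exp_le_exp.2 (neg_nonpos.mpr (Nat.cast_nonneg n))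
  rcases eq_or_ne z 0 with rfl | hz0
  · rw [hp0, Complex.log_one, norm_zero]; exact one_pos
  set r : ℝ := ‖z‖ with hrdef
  have hr0 : 0 < r := norm_pos_iff.2 hz0
  have hr1 : r < 1 := mem_ball_zero_iff.1 hz
  have hins : ∀ s : ℝ, 0 ≤ s → s ≤ 1 → ((s : ℂ) * z) ∈ Metric.ball (0 : ℂ) 1 := by
    intro s h0 h1
    rw [mem_ball_zero_iff, norm_mul, Complex.norm_real, Real.norm_eq_abs, _root_.abs_of_nonneg h0]
    nlinarith [norm_nonneg z]
  set g : ℝ → ℂ := fun s => Complex.log (p ((s : ℂ) * z)) with hgdef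
  have hg0 : g 0 = 0 := by
    simp [hgdef, hp0]
  set Kp : ℝ := (1 - A) * r with hKpdef
  set ε : ℝ := A * r with hεdef
  have hKp0 : 0 ≤ Kp := mul_nonneg (by linarith) hr0.le
  have hε0 : 0 < ε := mul_pos hA0 hr0
  set c : ℝ := gronwallBound 0 Kp ε 1 with hcdef
  have hc1 : c < 1 := G_lt_one n hr0.le hr1
  have hc0 : 0 ≤ c := by
    have := gronwallBound_mono' hKp0 hε0.le (zero_le_one : (0:ℝ) ≤ 1)
    rwa [gronwallBound_x0] at this
  set T : Set ℝ := {t | t ∈ Set.Icc (0 : ℝ) 1 ∧ ∀ s ∈ Set.Icc (0 : ℝ) t, ‖g s‖ ≤ c} with hTdef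
  have h0T : (0 : ℝ) ∈ T := by
    refine ⟨⟨le_refl 0, zero_le_one⟩, ?_⟩
    intro s hs
    have : s = 0 := le_antisymm hs.2 hs.1
    rw [this, hg0, norm_zero]; exact hc0
  have hTb : BddAbove T := ⟨1, fun t ht => ht.1.2⟩
  set τ : ℝ := sSup T with hτdef
  have hτ0 : 0 ≤ τ := le_csSup hTb h0T
  have hτ1 : τ ≤ 1 := csSup_le ⟨0, h0T⟩ fun t ht => ht.1.2
  have hlt : ∀ s : ℝ, 0 ≤ s → s < τ → ‖g s‖ ≤ c := by
    intro s h0 hsτ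
    obtain ⟨t, htT, hst⟩ := exists_lt_of_lt_csSup ⟨0, h0T⟩ hsτ
    exact htT.2 s ⟨h0, hst.le⟩
  -- closedness: the bound also holds at τ
  have hτbound : ‖g τ‖ ≤ c := by
    rcases eq_or_lt_of_le hτ0 with h0t | h0t
    · rw [← h0t, hg0, norm_zero]; exact hc0
    · set C : Set ℂ := Complex.exp '' Metric.closedBall (0 : ℂ) c with hCdef
      have hCclosed : IsClosed C :=
        ((isCompact_closedBall (0 : ℂ) c).image Complex.continuous_exp).isClosed
      have hcontp : ContinuousAt (fun s : ℝ => p ((s : ℂ) * z)) τ := by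
        have h1 : ContinuousAt (fun s : ℝ => (s : ℂ) * z) τ :=
          (Complex.continuous_ofReal.mul continuous_const).continuousAt
        have h2 : ContinuousAt p ((τ : ℂ) * z) :=
          (hp.differentiableAt (Metric.isOpen_ball.mem_nhds (hins τ hτ0 hτ1))).continuousAt
        exact h2.comp (f := fun s : ℝ => (s : ℂ) * z) h1
      have htend : Filter.Tendsto (fun s : ℝ => p ((s : ℂ) * z)) (nhdsWithin τ (Set.Iio τ))
          (nhds (p ((τ : ℂ) * z))) := hcontp.tendsto.mono_left nhdsWithin_le_nhds
      have hev : ∀ᶠ s : ℝ in nhdsWithin τ (Set.Iio τ), p ((s : ℂ) * z) ∈ C := by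
        filter_upwards [Ioo_mem_nhdsLT_of_mem (⟨h0t, le_refl τ⟩ : τ ∈ Set.Ioc 0 τ)] with s hs
        refine ⟨g s, ?_, ?_⟩
        · rw [Metric.mem_closedBall, dist_zero_right]
          exact hlt s hs.1.le hs.2
        · exact Complex.exp_log (hpne _ (hins s hs.1.le (le_trans hs.2.le hτ1)))
      have hmemC : p ((τ : ℂ) * z) ∈ C := hCclosed.mem_of_tendsto htend hev
      obtain ⟨u, humem, huexp⟩ := hmemC
      have hnu : ‖u‖ ≤ c := by
        rw [Metric.mem_closedBall, dist_zero_right] at humem; exact humem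
      have him : |u.im| ≤ c := le_trans (Complex.abs_im_le_norm u) hnu
      have hpi : c < Real.pi := by
        have := Real.pi_gt_three; linarith
      have hlog : g τ = u := by
        rw [hgdef]
        simp only
        rw [← huexp, Complex.log_exp (by linarith [(abs_le.1 him).1])
          (by linarith [(abs_le.1 him).2])]
      rw [hlog]; exact hnu
  have hIcc : ∀ s ∈ Set.Icc (0 : ℝ) τ, ‖g s‖ ≤ c := by
    intro s hs
    rcases lt_or_eq_of_le hs.2 with h | h
    · exact hlt s hs.1 h
    · rw [h]; exact hτbound
  -- on [0, τ], p (s z) lies in the slit plane and equals exp (g s)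
  have hslit : ∀ s ∈ Set.Icc (0 : ℝ) τ, p ((s : ℂ) * z) ∈ Complex.slitPlane := by
    intro s hs
    have hne := hpne _ (hins s hs.1 (le_trans hs.2 hτ1))
    have hexp : Complex.exp (g s) = p ((s : ℂ) * z) := Complex.exp_log hne
    rw [Complex.mem_slitPlane_iff]
    left
    rw [← hexp]
    exact exp_re_pos' (by
      have h1 : |(g s).im| ≤ ‖g s‖ := Complex.abs_im_le_norm _
      have h2 := hIcc s hs
      linarith [one_lt_half_pi])
  have hgc : ∀ s ∈ Set.Icc (0 : ℝ) τ, ContinuousAt g s := by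
    intro s hs
    have h1 : ContinuousAt (fun s : ℝ => (s : ℂ) * z) s :=
      (Complex.continuous_ofReal.mul continuous_const).continuousAt
    have h2 : ContinuousAt p ((s : ℂ) * z) :=
      (hp.differentiableAt (Metric.isOpen_ball.mem_nhds
        (hins s hs.1 (le_trans hs.2 hτ1)))).continuousAt
    exact ContinuousAt.clog (h2.comp (f := fun s : ℝ => (s : ℂ) * z) h1) (hslit s hs)
  -- derivative of g
  set f' : ℝ → ℂ := fun s => (p ((s : ℂ) * z))⁻¹ * (deriv p ((s : ℂ) * z) * z) with hf'def
  have hgderiv : ∀ s ∈ Set.Ico (0 : ℝ) τ, HasDerivAt g (f' s) s := by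
    intro s hs
    have hmem : ((s : ℂ) * z) ∈ Metric.ball (0 : ℂ) 1 := hins s hs.1 (le_trans hs.2.le hτ1)
    have h1 : HasDerivAt (fun u : ℂ => u * z) z (s : ℂ) := hasDerivAt_mul_const z
    have h2 : HasDerivAt p (deriv p ((s : ℂ) * z)) ((s : ℂ) * z) :=
      (hp.differentiableAt (Metric.isOpen_ball.mem_nhds hmem)).hasDerivAt
    have h3 : HasDerivAt Complex.log (p ((s : ℂ) * z))⁻¹ (p ((s : ℂ) * z)) :=
      Complex.hasDerivAt_log (hslit s ⟨hs.1, hs.2.le⟩)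
    have h5 : HasDerivAt (fun u : ℂ => p (u * z)) (deriv p ((s : ℂ) * z) * z) (s : ℂ) :=
      HasDerivAt.comp (h := fun u : ℂ => u * z) (s : ℂ) h2 h1
    have h4 : HasDerivAt (fun u : ℂ => Complex.log (p (u * z)))
        ((p ((s : ℂ) * z))⁻¹ * (deriv p ((s : ℂ) * z) * z)) (s : ℂ) :=
      HasDerivAt.comp (h := fun u : ℂ => p (u * z)) (s : ℂ) h3 h5
    exact h4.comp_ofReal
  -- Gronwall bound hypothesis
  have hbound : ∀ s ∈ Set.Ico (0 : ℝ) τ, ‖f' s‖ ≤ Kp * ‖g s‖ + ε := by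
    intro s hs
    have hsIcc : s ∈ Set.Icc (0 : ℝ) τ := ⟨hs.1, hs.2.le⟩
    have hmem : ((s : ℂ) * z) ∈ Metric.ball (0 : ℂ) 1 := hins s hs.1 (le_trans hs.2.le hτ1)
    have hne := hpne _ hmem
    set x : ℝ := ‖p ((s : ℂ) * z)‖ with hxdef
    have hx0 : 0 < x := norm_pos_iff.2 hne
    have h1 : ‖f' s‖ = x⁻¹ * (‖deriv p ((s : ℂ) * z)‖ * r) := by
      rw [hf'def]; simp only
      rw [norm_mul, norm_inv, norm_mul]
    have h2 : ‖deriv p ((s : ℂ) * z)‖ ≤ A * x ^ (n + 1) := hq _ hmem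
    have h3 : ‖f' s‖ ≤ x⁻¹ * (A * x ^ (n + 1) * r) := by
      rw [h1]
      apply mul_le_mul_of_nonneg_left _ (inv_nonneg.2 hx0.le)
      exact mul_le_mul_of_nonneg_right h2 (norm_nonneg z)
    have h4 : x⁻¹ * (A * x ^ (n + 1) * r) = A * x ^ n * r := by
      field_simp [pow_succ]; ring
    rw [h4] at h3
    -- x = exp (re (g s))
    have hexp : Complex.exp (g s) = p ((s : ℂ) * z) := Complex.exp_log hne
    have hxval : x = Real.exp ((g s).re) := by
      rw [hxdef, ← hexp, Complex.norm_exp]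
    have hxn : x ^ n = Real.exp ((n : ℝ) * (g s).re) := by
      rw [hxval, ← Real.exp_nat_mul]
    have hre : (n : ℝ) * (g s).re ≤ (n : ℝ) * ‖g s‖ :=
      mul_le_mul_of_nonneg_left (Complex.re_le_norm _) (Nat.cast_nonneg n)
    have h5 : A * x ^ n ≤ A * Real.exp ((n : ℝ) * ‖g s‖) := by
      rw [hxn]
      exact mul_le_mul_of_nonneg_left (Real.exp_le_exp.2 hre) hA0.le
    have h6 : A * Real.exp ((n : ℝ) * ‖g s‖) ≤ A + (1 - A) * ‖g s‖ :=
      chord_bound n (norm_nonneg _) (le_trans (hIcc s hsIcc) hc1.le)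
    have h7 : A * x ^ n * r ≤ (A + (1 - A) * ‖g s‖) * r :=
      mul_le_mul_of_nonneg_right (le_trans h5 h6) hr0.le
    calc ‖f' s‖ ≤ (A + (1 - A) * ‖g s‖) * r := le_trans h3 h7
      _ = Kp * ‖g s‖ + ε := by rw [hKpdef, hεdef]; ring
  -- apply Gronwall
  have hgron : ∀ x ∈ Set.Icc (0 : ℝ) τ, ‖g x‖ ≤ gronwallBound 0 Kp ε (x - 0) := by
    apply norm_le_gronwallBound_of_norm_deriv_right_le
    · intro s hs
      exact (hgc s hs).continuousWithinAt
    · intro s hs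
      exact ((hgderiv s hs).hasDerivWithinAt)
    · rw [hg0, norm_zero]
    · exact hbound
  -- τ must be 1
  have hτeq : τ = 1 := by
    by_contra hne1
    have hτlt : τ < 1 := lt_of_le_of_ne hτ1 hne1
    have h1 : ‖g τ‖ ≤ gronwallBound 0 Kp ε τ := by
      have := hgron τ ⟨hτ0, le_refl τ⟩
      rwa [sub_zero] at this
    have h2 : gronwallBound 0 Kp ε τ < c := by
      rw [hcdef]
      exact gronwallBound_strictMono hKp0 hε0 hτlt
    have h3 : ‖g τ‖ < c := lt_of_le_of_lt h1 h2
    -- continuity pushes the bound beyond τ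
    have hgcτ : ContinuousAt g τ := hgc τ ⟨hτ0, le_refl τ⟩
    have hev : ∀ᶠ s in nhds τ, ‖g s‖ < c := by
      have : Filter.Tendsto (fun s => ‖g s‖) (nhds τ) (nhds ‖g τ‖) := hgcτ.norm.tendsto
      exact this.eventually_lt_const h3
    obtain ⟨δ, hδ0, hδ⟩ := Metric.eventually_nhds_iff.1 hev
    set t' : ℝ := min 1 (τ + δ / 2) with ht'def
    have ht'τ : τ < t' := lt_min hτlt (by linarith)
    have ht'T : t' ∈ T := by
      refine ⟨⟨le_trans hτ0 ht'τ.le, min_le_left _ _⟩, ?_⟩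
      intro s hs
      rcases le_or_gt s τ with h | h
      · exact hIcc s ⟨hs.1, h⟩
      · apply le_of_lt
        apply hδ
        rw [Real.dist_eq, abs_of_pos (by linarith : (0:ℝ) < s - τ)]
        have : s ≤ t' := hs.2
        have : t' ≤ τ + δ / 2 := min_le_right _ _
        linarith
    have := le_csSup hTb ht'T
    linarith
  -- conclude
  have h1 : ‖g 1‖ ≤ gronwallBound 0 Kp ε 1 := by
    have := hgron 1 ⟨zero_le_one, by rw [hτeq]⟩
    rwa [sub_zero] at this
  have hg1 : g 1 = Complex.log (p z) := by
    rw [hgdef]; norm_num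
  rw [← hg1]
  exact lt_of_le_of_lt h1 hc1

theorem stmt_1 (n : ℕ) (β : ℝ) (hβ : 2 * Real.exp (n : ℝ) ≤ β)
    (p : ℂ → ℂ) (hp : DifferentiableOn ℂ p unitDisk) (hp0 : p 0 = 1)
    (hpne : ∀ z ∈ unitDisk, p z ≠ 0)
    (hsub : Subord (fun z => 1 + (β : ℂ) * z * deriv p z / (p z) ^ (n + 1))
      (fun z => (2 + z) / (2 - z))) :
    Subord p Complex.exp := by
  have hopen : IsOpen unitDisk := Metric.isOpen_ball
  have hdisk : unitDisk = Metric.ball (0 : ℂ) 1 := rfl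
  set A : ℝ := Real.exp (-(n : ℝ)) with hAdef
  have hA0 : 0 < A := Real.exp_pos _
  have hexpn : 0 < Real.exp (n : ℝ) := Real.exp_pos _
  have hAe : A * Real.exp (n : ℝ) = 1 := by
    rw [hAdef, ← Real.exp_add]; simp
  have hβpos : (0 : ℝ) < β := by nlinarith
  have h2A : 2 ≤ β * A := by nlinarith
  -- deriv p is differentiable on the disk
  have hderiv : DifferentiableOn ℂ (deriv p) unitDisk :=
    ((hp.analyticOnNhd hopen).deriv).differentiableOn
  set φ : ℂ → ℂ := fun z => z * deriv p z / (p z) ^ (n + 1) with hφdef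
  have hφdiff : DifferentiableOn ℂ φ unitDisk := by
    intro z hz
    exact ((differentiableWithinAt_id.mul (hderiv z hz)).div
      ((hp z hz).pow (n + 1)) (pow_ne_zero _ (hpne z hz)))
  obtain ⟨w, hwdiff, hw0, hwlt, hweq⟩ := hsub
  -- the strict bound ‖φ z‖ < A
  have hφlt : ∀ z ∈ unitDisk, ‖φ z‖ < A := by
    intro z hz
    have hwz := hwlt z hz
    have h2w : ‖(2 : ℂ) - w z‖ ≥ 2 - ‖w z‖ := by
      have := norm_sub_norm_le (2 : ℂ) (w z)
      simpa using this
    have h2wpos : 0 < ‖(2 : ℂ) - w z‖ := by linarith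
    have h2wne : (2 : ℂ) - w z ≠ 0 := norm_pos_iff.1 h2wpos
    have heq := hweq z hz
    simp only at heq
    have hβφ : (β : ℂ) * φ z = 2 * w z / (2 - w z) := by
      rw [hφdef]
      simp only
      have h1 : (β : ℂ) * (z * deriv p z / p z ^ (n + 1))
          = 1 + (β : ℂ) * z * deriv p z / p z ^ (n + 1) - 1 := by ring
      rw [h1, heq]
      field_simp
      ring
    have hnorm : β * ‖φ z‖ < 2 := by
      have h3 : ‖(β : ℂ) * φ z‖ = β * ‖φ z‖ := by
        rw [norm_mul, Complex.norm_real, Real.norm_eq_abs, abs_of_pos hβpos]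
      rw [← h3, hβφ, norm_div, norm_mul]
      have h4 : ‖(2 : ℂ)‖ = 2 := by norm_num
      rw [h4]
      rw [div_lt_iff₀ h2wpos]
      nlinarith
    have : β * ‖φ z‖ < β * A := by nlinarith
    exact lt_of_mul_lt_mul_left this hβpos.le
  -- Schwarz lemma
  have hφ0 : φ 0 = 0 := by simp [hφdef]
  have hmaps : Set.MapsTo φ (Metric.ball 0 1) (Metric.ball (φ 0) A) := by
    intro z hz
    rw [hφ0, Metric.mem_ball, dist_zero_right]
    exact hφlt z hz
  have hSch : ∀ z ∈ unitDisk, ‖φ z‖ ≤ A * ‖z‖ := by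
    intro z hz
    have := Complex.dist_le_div_mul_dist_of_mapsTo_ball hφdiff (hmaps.mono_right Metric.ball_subset_closedBall) hz
    rw [hφ0, dist_zero_right, dist_zero_right, div_one] at this
    exact this
  have h0disk : (0 : ℂ) ∈ unitDisk := by
    rw [hdisk]; exact Metric.mem_ball_self one_pos
  -- the pointwise derivative bound
  have hq : ∀ z ∈ Metric.ball (0 : ℂ) 1, ‖deriv p z‖ ≤ A * ‖p z‖ ^ (n + 1) := by
    intro z hz
    rcases eq_or_ne z 0 with rfl | hz0
    · -- use the derivative form of Schwarz at the center
      set ψ : ℂ → ℂ := fun u => deriv p u / (p u) ^ (n + 1) with hψdef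
      have hψd : DifferentiableAt ℂ ψ 0 := by
        apply DifferentiableAt.div
        · exact hderiv.differentiableAt (hopen.mem_nhds h0disk)
        · exact (hp.differentiableAt (hopen.mem_nhds h0disk)).pow (n + 1)
        · exact pow_ne_zero _ (hpne 0 h0disk)
      have hφψ : φ = fun u => u * ψ u := by
        funext u
        rw [hφdef, hψdef]
        simp only
        rw [mul_div_assoc]
      have hder : HasDerivAt φ (ψ 0) 0 := by
        rw [hφψ]
        have := (hasDerivAt_id' (x := (0 : ℂ))).mul hψd.hasDerivAt
        simp only [one_mul, zero_mul, add_zero] at this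
        exact this
      have hψ0 : ψ 0 = deriv p 0 := by
        rw [hψdef]; simp [hp0]
      have hdb := Complex.norm_deriv_le_div_of_mapsTo_ball hφdiff (hmaps.mono_right Metric.ball_subset_closedBall) one_pos
      rw [hder.deriv, hψ0, div_one] at hdb
      rw [hp0]
      simpa using hdb
    · have h1 := hSch z hz
      rw [hφdef] at h1
      simp only at h1
      rw [norm_div, norm_mul, norm_pow] at h1
      have hz0' : 0 < ‖z‖ := norm_pos_iff.2 hz0
      have hpz : 0 < ‖p z‖ := norm_pos_iff.2 (hpne z hz)
      rw [div_le_iff₀ (by positivity)] at h1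
      have h2 : ‖z‖ * ‖deriv p z‖ ≤ ‖z‖ * (A * ‖p z‖ ^ (n + 1)) := by nlinarith
      exact le_of_mul_le_mul_left h2 hz0'
  -- main bound
  have main : ∀ z ∈ unitDisk, ‖Complex.log (p z)‖ < 1 :=
    key_bound n p hp hp0 hpne hq
  -- p z lies in the slit plane
  have hslit : ∀ z ∈ unitDisk, p z ∈ Complex.slitPlane := by
    intro z hz
    have hne := hpne z hz
    have hexp : Complex.exp (Complex.log (p z)) = p z := Complex.exp_log hne
    rw [Complex.mem_slitPlane_iff]
    left
    rw [← hexp]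
    apply exp_re_pos'
    have h1 : |(Complex.log (p z)).im| ≤ ‖Complex.log (p z)‖ := Complex.abs_im_le_norm _
    have h2 := main z hz
    linarith [one_lt_half_pi]
  refine ⟨fun z => Complex.log (p z), ?_, ?_, ?_, ?_⟩
  · intro z hz
    exact ((Complex.differentiableAt_log (hslit z hz)).comp z
      (hp.differentiableAt (hopen.mem_nhds hz))).differentiableWithinAt
  · show Complex.log (p 0) = 0
    rw [hp0, Complex.log_one]
  · exact main
  · intro z hz
    exact (Complex.exp_log (hpne z hz)).symm
end
end

section
/- Let α and β be positive real numbers satisfying α(e−1) + βe ≥ e, and let p ∈ H₁. If the function z ↦ (1−α)·p(z) + α·p(z)² + β·z·p′(z) is subordinate to z ↦ 1 + z on 𝔻, then p is subordinate to z ↦ e^z on 𝔻. -/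
open Complex

noncomputable section

open Metric Set Filter Topology


section RealIneq

lemma my_sin_lb {y : ℝ} (h0 : 0 ≤ y) (h1 : y ≤ 1) :
    y^2 - (7/32)*y^4 ≤ y * Real.sin y := by
  have hb := Real.sin_bound (x := y) (by rwa [_root_.abs_of_nonneg h0])
  rw [_root_.abs_of_nonneg h0] at hb
  have h2 := (abs_le.1 hb).1
  have h5 : y^5 ≤ y^4 := by nlinarith [pow_nonneg h0 4]
  nlinarith [mul_le_mul_of_nonneg_left h2 h0]

lemma my_cos_ub {y : ℝ} (h0 : 0 ≤ y) (h1 : y ≤ 1) :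
    Real.cos y ≤ 1 - y^2/2 + (5/96)*y^4 := by
  have hb := Real.cos_bound (x := y) (by rwa [_root_.abs_of_nonneg h0])
  rw [_root_.abs_of_nonneg h0] at hb
  have := (abs_le.1 hb).2
  linarith

lemma my_exp_lb {u : ℝ} (h0 : 0 ≤ u) (h1 : u ≤ 1) :
    1 + u + u^2/2 - (2/9)*u^3 ≤ Real.exp u := by
  have hb := Real.exp_bound (x := u) (by rwa [_root_.abs_of_nonneg h0]) (by norm_num : 0 < 3)
  rw [_root_.abs_of_nonneg h0] at hb
  have := (abs_le.1 hb).1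
  norm_num [Finset.sum_range_succ, Nat.factorial] at this
  nlinarith [this]

lemma my_exp_ub {u : ℝ} (h0 : 0 ≤ u) (h1 : u ≤ 1) :
    Real.exp u ≤ 1 + u + u^2/2 + (2/9)*u^3 := by
  have hb := Real.exp_bound (x := u) (by rwa [_root_.abs_of_nonneg h0]) (by norm_num : 0 < 3)
  rw [_root_.abs_of_nonneg h0] at hb
  have := (abs_le.1 hb).2
  norm_num [Finset.sum_range_succ, Nat.factorial] at this
  nlinarith [this]

set_option maxHeartbeats 1000000 in
lemma ineqP1' {x y : ℝ} (hy : 0 ≤ y) (hxy : x^2 + y^2 = 1) :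
    1 ≤ Real.exp x + x * Real.exp x - x * Real.cos y + y * Real.sin y := by
  have hy1 : y ≤ 1 := by nlinarith
  have hx0 : -1 ≤ x := by nlinarith
  have hx1 : x ≤ 1 := by nlinarith
  have hsin := my_sin_lb hy hy1
  have hA : 0 < Real.exp x := Real.exp_pos x
  rcases le_or_gt 0 x with hx | hx
  · have h1 : 1 ≤ Real.exp x := Real.one_le_exp hx
    have hcos : Real.cos y ≤ 1 := Real.cos_le_one y
    nlinarith [mul_le_mul_of_nonneg_left hcos hx, sq_nonneg y]
  · have hcos : 1 - y^2/2 ≤ Real.cos y := Real.one_sub_sq_div_two_le_cos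
    have hEA : 2 + x ≤ Real.exp 1 * Real.exp x := by
      rw [← Real.exp_add]
      have := Real.add_one_le_exp (1+x); linarith
    have hE1 : Real.exp 1 < 2.7182818286 := Real.exp_one_lt_d9
    have hE2 : (2.7182818283:ℝ) < Real.exp 1 := Real.exp_one_gt_d9
    have hEpos : (0:ℝ) < Real.exp 1 := Real.exp_pos 1
    have h1x : (0:ℝ) ≤ 1 + x := by linarith
    have hnx : (0:ℝ) ≤ -x := by linarith
    -- key scaled facts
    have k1 : (1+x)*(2+x) ≤ (1+x)*(Real.exp 1 * Real.exp x) :=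
      mul_le_mul_of_nonneg_left hEA h1x
    have k2 : Real.exp 1 * ((-x)*(1-y^2/2)) ≤ Real.exp 1 * ((-x)*Real.cos y) :=
      mul_le_mul_of_nonneg_left (mul_le_mul_of_nonneg_left hcos hnx) hEpos.le
    have k3 : Real.exp 1 * (y^2 - (7/32)*y^4) ≤ Real.exp 1 * (y*Real.sin y) :=
      mul_le_mul_of_nonneg_left hsin hEpos.le
    -- polynomial fact
    have hpoly : Real.exp 1 ≤ (1+x)*(2+x) + Real.exp 1*((-x)*(1-y^2/2))
        + Real.exp 1*(y^2 - (7/32)*y^4) := by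
      have hs : y^2 = 1 - x^2 := by linarith
      have hs4 : y^4 = (1-x^2)^2 := by
        have h4 : y^4 = (y^2)^2 := by ring
        rw [h4, hs]
      rw [hs, hs4]
      nlinarith [mul_nonneg h1x h1x, mul_nonneg (mul_nonneg h1x h1x) h1x,
        mul_nonneg (mul_nonneg (mul_nonneg h1x h1x) h1x) h1x,
        mul_nonneg (mul_nonneg (mul_nonneg h1x h1x) h1x) hnx,
        mul_nonneg (mul_nonneg h1x h1x) hnx]
    have : Real.exp 1 ≤ Real.exp 1 * (Real.exp x + x*Real.exp x - x*Real.cos y + y*Real.sin y) := by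
      have expand : (1+x)*(Real.exp 1*Real.exp x) + Real.exp 1*((-x)*Real.cos y)
          + Real.exp 1*(y*Real.sin y)
          = Real.exp 1 * (Real.exp x + x*Real.exp x - x*Real.cos y + y*Real.sin y) := by ring
      linarith [k1, k2, k3, hpoly]
    exact le_of_mul_le_mul_left (by linarith) hEpos

set_option maxHeartbeats 1000000 in
lemma ineqC' {x y : ℝ} (hy : 0 ≤ y) (hxy : x^2 + y^2 = 1) :
    Real.exp 1 - 1 + Real.exp 1 * x ≤ Real.exp (1+x) * (x * Real.cos y + y * Real.sin y) := by
  have hy1 : y ≤ 1 := by nlinarith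
  have hx0 : -1 ≤ x := by nlinarith
  have hx1 : x ≤ 1 := by nlinarith
  have hsin := my_sin_lb hy hy1
  have hE1 : Real.exp 1 < 2.7182818286 := Real.exp_one_lt_d9
  have hE2 : (2.7182818283:ℝ) < Real.exp 1 := Real.exp_one_gt_d9
  have hEpos : (0:ℝ) < Real.exp 1 := Real.exp_pos 1
  have hBpos : (0:ℝ) < Real.exp (1+x) := Real.exp_pos _
  rcases le_or_gt 0 x with hx | hx
  · -- x ≥ 0
    have hcos : 1 - y^2/2 ≤ Real.cos y := Real.one_sub_sq_div_two_le_cos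
    have hbr : x*(1-y^2/2) + (y^2 - (7/32)*y^4) ≤ x*Real.cos y + y*Real.sin y := by
      nlinarith [mul_le_mul_of_nonneg_left hcos hx]
    have hb3 : 0 ≤ x*(1-y^2/2) + (y^2 - (7/32)*y^4) := by nlinarith
    have hB : Real.exp 1 * (1+x) ≤ Real.exp (1+x) := by
      rw [Real.exp_add]
      have h := Real.add_one_le_exp x
      nlinarith
    have step1 : Real.exp 1 * (1+x) * (x*(1-y^2/2) + (y^2 - (7/32)*y^4))
        ≤ Real.exp (1+x) * (x*Real.cos y + y*Real.sin y) := by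
      calc Real.exp 1 * (1+x) * (x*(1-y^2/2) + (y^2 - (7/32)*y^4))
          ≤ Real.exp (1+x) * (x*(1-y^2/2) + (y^2 - (7/32)*y^4)) :=
            mul_le_mul_of_nonneg_right hB hb3
        _ ≤ Real.exp (1+x) * (x*Real.cos y + y*Real.sin y) :=
            mul_le_mul_of_nonneg_left hbr hBpos.le
    have hpoly : Real.exp 1 - 1 + Real.exp 1 * x
        ≤ Real.exp 1 * (1+x) * (x*(1-y^2/2) + (y^2 - (7/32)*y^4)) := by
      have hs : y^2 = 1 - x^2 := by linarith
      have hs4 : y^4 = (1-x^2)^2 := by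
        have h4 : y^4 = (y^2)^2 := by ring
        rw [h4, hs]
      rw [hs, hs4]
      have hW : x + 0.633 ≤ (1+x)*(x*(1-(1-x^2)/2) + ((1-x^2) - (7/32)*(1-x^2)^2)) := by
        nlinarith [mul_nonneg hx hx, mul_nonneg (mul_nonneg hx hx) hx,
          mul_nonneg (mul_nonneg (mul_nonneg hx hx) hx) hx,
          mul_nonneg (mul_nonneg (mul_nonneg (mul_nonneg hx hx) hx) hx) hx,
          mul_nonneg hx (by linarith : (0:ℝ) ≤ 1-x),
          mul_nonneg (mul_nonneg hx hx) (by linarith : (0:ℝ) ≤ 1-x),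
          mul_nonneg (mul_nonneg (mul_nonneg hx hx) hx) (by linarith : (0:ℝ) ≤ 1-x)]
      have h2 : Real.exp 1 * (x + 0.633) ≤ Real.exp 1 * ((1+x)*(x*(1-(1-x^2)/2) + ((1-x^2) - (7/32)*(1-x^2)^2))) :=
        mul_le_mul_of_nonneg_left hW hEpos.le
      nlinarith [h2]
    linarith
  · -- x < 0
    have hcosu := my_cos_ub hy hy1
    have hbr : x*(1-y^2/2+(5/96)*y^4) + (y^2 - (7/32)*y^4) ≤ x*Real.cos y + y*Real.sin y := by
      have : x*(1-y^2/2+(5/96)*y^4) ≤ x*Real.cos y :=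
        mul_le_mul_of_nonpos_left hcosu hx.le
      linarith
    have hu0 : (0:ℝ) ≤ 1+x := by linarith
    have hu1 : 1+x ≤ 1 := by linarith
    have hBl := my_exp_lb hu0 hu1
    have hBu := my_exp_ub hu0 hu1
    have hmono : Real.exp (1+x) * (x*(1-y^2/2+(5/96)*y^4) + (y^2 - (7/32)*y^4))
        ≤ Real.exp (1+x) * (x*Real.cos y + y*Real.sin y) :=
      mul_le_mul_of_nonneg_left hbr hBpos.le
    set b : ℝ := x*(1-y^2/2+(5/96)*y^4) + (y^2 - (7/32)*y^4) with hbdef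
    have hs : y^2 = 1 - x^2 := by linarith
    have hs4 : y^4 = (1-x^2)^2 := by
      have h4 : y^4 = (y^2)^2 := by ring
      rw [h4, hs]
    rcases le_or_gt 0 b with hb | hb
    · have step : (1+(1+x)+(1+x)^2/2-(2/9)*(1+x)^3) * b ≤ Real.exp (1+x) * b :=
        mul_le_mul_of_nonneg_right hBl hb
      have hpoly : Real.exp 1 - 1 + Real.exp 1 * x
          ≤ (1+(1+x)+(1+x)^2/2-(2/9)*(1+x)^3) * b := by
        rw [hbdef, hs, hs4]
        have hbpos' : (0:ℝ) ≤ x*(1-(1-x^2)/2+(5/96)*(1-x^2)^2) + ((1-x^2) - (7/32)*(1-x^2)^2) := by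
          rw [hbdef, hs, hs4] at hb; exact hb
        nlinarith [mul_nonneg hu0 hu0, mul_nonneg (mul_nonneg hu0 hu0) hu0,
          mul_nonneg (mul_nonneg (mul_nonneg hu0 hu0) hu0) hu0,
          mul_nonneg (mul_nonneg (mul_nonneg (mul_nonneg hu0 hu0) hu0) hu0) hu0,
          mul_nonneg (mul_nonneg (mul_nonneg hu0 hu0) hu0) (by linarith : (0:ℝ) ≤ -x),
          mul_nonneg (mul_nonneg hu0 hu0) (by linarith : (0:ℝ) ≤ -x),
          hbpos', mul_nonneg hbpos' hu0, mul_nonneg (mul_nonneg hbpos' hu0) hu0]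
      exact hpoly.trans (step.trans hmono)
    · have step : (1+(1+x)+(1+x)^2/2+(2/9)*(1+x)^3) * b ≤ Real.exp (1+x) * b :=
        mul_le_mul_of_nonpos_right hBu hb.le
      have hpoly : Real.exp 1 - 1 + Real.exp 1 * x
          ≤ (1+(1+x)+(1+x)^2/2+(2/9)*(1+x)^3) * b := by
        rw [hbdef, hs, hs4]
        have hbneg' : x*(1-(1-x^2)/2+(5/96)*(1-x^2)^2) + ((1-x^2) - (7/32)*(1-x^2)^2) ≤ 0 := by
          rw [hbdef, hs, hs4] at hb; exact hb.le
        nlinarith [mul_nonneg hu0 hu0, mul_nonneg (mul_nonneg hu0 hu0) hu0,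
          mul_nonneg (mul_nonneg (mul_nonneg hu0 hu0) hu0) hu0,
          mul_nonneg (mul_nonneg (mul_nonneg (mul_nonneg hu0 hu0) hu0) hu0) hu0,
          mul_nonneg (mul_nonneg (mul_nonneg (mul_nonneg (mul_nonneg hu0 hu0) hu0) hu0) hu0) hu0,
          mul_nonneg (mul_nonneg (mul_nonneg hu0 hu0) hu0) (by linarith : (0:ℝ) ≤ -x),
          mul_nonneg (mul_nonneg hu0 hu0) (by linarith : (0:ℝ) ≤ -x),
          mul_nonneg (mul_nonneg (mul_nonneg (mul_nonneg hu0 hu0) hu0) hu0) (by linarith : (0:ℝ) ≤ -x)]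
      exact hpoly.trans (step.trans hmono)

lemma ineqP1 {x y : ℝ} (hxy : x^2 + y^2 = 1) :
    1 ≤ Real.exp x + x * Real.exp x - x * Real.cos y + y * Real.sin y := by
  rcases le_or_gt 0 y with hy | hy
  · exact ineqP1' hy hxy
  · have h := ineqP1' (x := x) (y := -y) (by linarith) (by simpa using hxy)
    rw [Real.cos_neg, Real.sin_neg] at h
    linarith [h]

lemma ineqC {x y : ℝ} (hxy : x^2 + y^2 = 1) :
    Real.exp 1 - 1 + Real.exp 1 * x ≤ Real.exp (1+x) * (x * Real.cos y + y * Real.sin y) := by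
  rcases le_or_gt 0 y with hy | hy
  · exact ineqC' hy hxy
  · have h := ineqC' (x := x) (y := -y) (by linarith) (by simpa using hxy)
    rw [Real.cos_neg, Real.sin_neg] at h
    convert h using 2
    ring

end RealIneq



lemma re_exp_ge {ζ : ℂ} (h : ‖ζ‖ ≤ 1) :
    Real.exp (-1) * Real.cos 1 ≤ (Complex.exp ζ).re := by
  rw [Complex.exp_re]
  have hre : |ζ.re| ≤ 1 := le_trans (by simpa using Complex.abs_re_le_norm ζ) h
  have him : |ζ.im| ≤ 1 := le_trans (by simpa using Complex.abs_im_le_norm ζ) h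
  have h1 : Real.exp (-1) ≤ Real.exp ζ.re := Real.exp_le_exp.2 (by cases abs_le.1 hre; linarith)
  have h2 : Real.cos 1 ≤ Real.cos ζ.im := by
    rw [show Real.cos ζ.im = Real.cos |ζ.im| from (Real.cos_abs _).symm]
    exact Real.cos_le_cos_of_nonneg_of_le_pi (abs_nonneg _)
      (by linarith [Real.pi_gt_three] : (1:ℝ) ≤ Real.pi) him
  have h3 : (0:ℝ) < Real.cos 1 := Real.cos_one_pos
  have h4 : (0:ℝ) < Real.exp ζ.re := Real.exp_pos _
  nlinarith [h1, h2]

lemma schwarz_cb {q : ℂ → ℂ} {r : ℝ} (hr : 0 < r)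
    (hd : DifferentiableOn ℂ q (Metric.ball 0 r)) (hq0 : q 0 = 0)
    (hb : ∀ z ∈ Metric.ball (0:ℂ) r, ‖q z‖ ≤ 1) {z : ℂ} (hz : z ∈ Metric.ball (0:ℂ) r) :
    ‖q z‖ ≤ ‖z‖ / r := by
  have key : ∀ ε : ℝ, 0 < ε → ‖q z‖ ≤ (1+ε)/r * ‖z‖ := by
    intro ε hε
    have hmaps : MapsTo q (Metric.ball 0 r) (Metric.ball (q 0) (1+ε)) := by
      intro w hw
      rw [hq0]
      simp only [Metric.mem_ball, dist_zero_right]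
      exact lt_of_le_of_lt (hb w hw) (by linarith)
    have := Complex.dist_le_div_mul_dist_of_mapsTo_ball hd (hmaps.mono_right Metric.ball_subset_closedBall) hz
    simpa [hq0, dist_zero_right] using this
  have hzr : ‖z‖ < r := by simpa [Metric.mem_ball, dist_zero_right] using hz
  have hzr' : ‖z‖ / r ≤ 1 := by rw [div_le_one hr]; exact hzr.le
  refine le_of_forall_pos_le_add ?_
  intro ε hε
  have h2 := key ε hε
  have : (1+ε)/r * ‖z‖ = ‖z‖/r + ε * (‖z‖/r) := by field_simp
  rw [this] at h2
  have h3 : ε * (‖z‖/r) ≤ ε := by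
    nlinarith [norm_nonneg z, div_nonneg (norm_nonneg z) hr.le]
  linarith



set_option maxHeartbeats 1000000 in
lemma norm_admissible {α β m : ℝ} (hα : 0 < α) (hβ : 0 < β) (hm : 1 ≤ m)
    (hcond : Real.exp 1 ≤ α * (Real.exp 1 - 1) + β * Real.exp 1)
    (c : ℂ) (hc : ‖c‖ = 1) :
    1 ≤ ‖((1:ℂ) - (α:ℂ)) * Complex.exp c + (α:ℂ) * (Complex.exp c)^2
        + ((β:ℂ) * ((m:ℂ) * (c * Complex.exp c))) - 1‖ := by
  set w : ℂ := Complex.exp c with hw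
  set x : ℝ := c.re
  set y : ℝ := c.im
  set ex : ℝ := Real.exp x with hex
  set cy : ℝ := Real.cos y
  set sy : ℝ := Real.sin y
  have hexpos : 0 < ex := Real.exp_pos x
  have hxy : x^2 + y^2 = 1 := by
    have := Complex.sq_norm c
    rw [Complex.normSq_apply] at this
    rw [hc] at this
    nlinarith [this]
  have hpyth : sy^2 + cy^2 = 1 := Real.sin_sq_add_cos_sq y
  have hw_re : w.re = ex * cy := by rw [hw, Complex.exp_re]
  have hw_im : w.im = ex * sy := by rw [hw, Complex.exp_im]
  set E : ℂ := ((1:ℂ) - (α:ℂ)) * w + (α:ℂ) * w^2 + ((β:ℂ) * ((m:ℂ) * (c * w))) - 1 with hE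
  set d : ℂ := (starRingEnd ℂ) (c * w) with hd
  -- decomposition
  have hsplit : E * d = (w - 1) * d + (α:ℂ) * ((w*w - w) * d) + ((β:ℂ)*(m:ℂ)) * ((c*w) * d) := by
    rw [hE]; ring
  -- real parts of the three pieces
  have hd_re : d.re = x * w.re - y * w.im := by
    simp [hd, Complex.mul_re]; rfl
  have hd_im : d.im = -(x * w.im + y * w.re) := by
    simp [hd, Complex.mul_im]; ring
  have T1 : ((w - 1) * d).re = ex^2*x - ex*(x*cy - y*sy) := by
    simp only [Complex.mul_re, Complex.sub_re, Complex.sub_im, Complex.one_re, Complex.one_im,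
      hd_re, hd_im, hw_re, hw_im]
    linear_combination (ex^2*x) * hpyth
  have T2 : ((w*w - w) * d).re = ex*(ex^2*(x*cy + y*sy) - x*ex) := by
    simp only [Complex.mul_re, Complex.mul_im, Complex.sub_re, Complex.sub_im,
      hd_re, hd_im, hw_re, hw_im]
    linear_combination (ex^3*(x*cy + y*sy) - ex^2*x) * hpyth
  have T3 : ((c*w) * d).re = ex^2 := by
    simp only [Complex.mul_re, Complex.mul_im, hd_re, hd_im, hw_re, hw_im]
    linear_combination (ex^2*(x^2+y^2)) * hpyth + ex^2 * hxy
  have hre : (E * d).re = (ex^2*x - ex*(x*cy - y*sy)) + α*(ex*(ex^2*(x*cy + y*sy) - x*ex))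
      + (β*m)*ex^2 := by
    rw [hsplit]
    have hcast : (β:ℂ)*(m:ℂ) = ((β*m:ℝ):ℂ) := by push_cast; ring
    rw [Complex.add_re, Complex.add_re, T1, hcast, Complex.re_ofReal_mul,
      Complex.re_ofReal_mul, T2, T3]
  -- now the inequality chain
  have hf : 1 - ex ≤ x*ex - (x*cy - y*sy) := by
    have := ineqP1 hxy
    rw [← hex] at this
    linarith
  have hCh : ex*(Real.exp 1 - 1) ≤ Real.exp 1 * (ex^2*(x*cy + y*sy) - x*ex) := by
    have h1 := ineqC hxy
    have h2 : Real.exp (1+x) = Real.exp 1 * ex := by rw [Real.exp_add]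
    rw [h2] at h1
    nlinarith [h1, hexpos]
  have hE1pos : (0:ℝ) < Real.exp 1 := Real.exp_pos 1
  have hmain : ex ≤ (E * d).re := by
    rw [hre]
    have k1 : Real.exp 1 * (ex*(1 - ex)) ≤ Real.exp 1 * (ex*(x*ex - (x*cy - y*sy))) :=
      mul_le_mul_of_nonneg_left (mul_le_mul_of_nonneg_left hf hexpos.le) hE1pos.le
    have k2 : (α*ex)*(ex*(Real.exp 1 - 1)) ≤ (α*ex)*(Real.exp 1 * (ex^2*(x*cy + y*sy) - x*ex)) :=
      mul_le_mul_of_nonneg_left hCh (by positivity)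
    have k3 : Real.exp 1 * ex^2 ≤ (α * (Real.exp 1 - 1) + β * Real.exp 1) * ex^2 :=
      mul_le_mul_of_nonneg_right hcond (sq_nonneg ex)
    have k4 : Real.exp 1 * (β*ex^2) ≤ Real.exp 1 * ((β*m)*ex^2) := by
      apply mul_le_mul_of_nonneg_left _ hE1pos.le
      have h9 := mul_le_mul_of_nonneg_left hm (mul_nonneg hβ.le (sq_nonneg ex))
      nlinarith [h9]
    have key : Real.exp 1 * ex ≤ Real.exp 1 * ((ex^2*x - ex*(x*cy - y*sy))
        + α*(ex*(ex^2*(x*cy + y*sy) - x*ex)) + (β*m)*ex^2) := by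
      linarith [k1, k2, k3, k4]
    exact le_of_mul_le_mul_left key hE1pos
  have hd_abs : ‖d‖ = ex := by
    rw [hd, Complex.norm_conj, norm_mul, Complex.norm_exp]
    rw [hc, one_mul]
  have hfin : (E*d).re ≤ ‖E‖ * ex := by
    calc (E*d).re ≤ ‖E*d‖ := Complex.re_le_norm _
      _ = ‖E‖ * ‖d‖ := norm_mul _ _
      _ = ‖E‖ * ex := by rw [hd_abs]
  have hlast : 1 * ex ≤ ‖E‖ * ex := by
    rw [one_mul]; exact le_trans hmain hfin
  exact le_of_mul_le_mul_right hlast hexpos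



set_option maxHeartbeats 1000000 in
lemma jack_lemma {q : ℂ → ℂ} {V : Set ℂ} (hV : IsOpen V) (hq : DifferentiableOn ℂ q V)
    {r : ℝ} (hr : 0 < r) {z₀ : ℂ} (hball : Metric.closedBall (0:ℂ) r ⊆ V)
    (hz₀ : ‖z₀‖ = r)
    (hbound : ∀ z : ℂ, ‖z‖ ≤ r → Complex.normSq (q z) ≤ 1)
    (hq₀ : Complex.normSq (q z₀) = 1)
    (hschwarz : ∀ s : ℝ, 0 ≤ s → s < 1 → ‖q ((s:ℂ) * z₀)‖ ≤ s) :
    ∃ m : ℝ, 1 ≤ m ∧ z₀ * deriv q z₀ = (m:ℂ) * q z₀ := by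
  have hmem : ∀ z : ℂ, ‖z‖ ≤ r → z ∈ V := by
    intro z hz
    exact hball (by simpa [Metric.mem_closedBall, dist_zero_right] using hz)
  have hqat : ∀ z : ℂ, ‖z‖ ≤ r → HasDerivAt q (deriv q z) z := fun z hz =>
    ((hq.differentiableAt (hV.mem_nhds (hmem z hz))).hasDerivAt)
  set c : ℂ := q z₀ with hc
  set D : ℂ := deriv q z₀ with hD
  have hDq : HasDerivAt q D z₀ := hqat z₀ (le_of_eq hz₀)
  set b : ℂ := D * z₀ with hb
  -- tangential direction
  have tangential : b.re * c.im - b.im * c.re = 0 := by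
    set γ : ℝ → ℂ := fun t => z₀ * Complex.exp ((t:ℂ) * Complex.I) with hγ
    have hγ0 : γ 0 = z₀ := by simp [hγ]
    have hγnorm : ∀ t : ℝ, ‖γ t‖ = r := by
      intro t
      simp only [hγ, norm_mul, Complex.norm_exp_ofReal_mul_I, mul_one]
      exact hz₀
    have h1 : HasDerivAt (fun t : ℝ => ((t:ℂ) * Complex.I)) Complex.I 0 := by
      simpa using (Complex.ofRealCLM.hasDerivAt (x := (0:ℝ))).mul_const Complex.I
    have h2 : HasDerivAt (fun t : ℝ => Complex.exp ((t:ℂ) * Complex.I)) Complex.I 0 := by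
      simpa using h1.cexp
    have hγd : HasDerivAt γ (z₀ * Complex.I) 0 := by
      simpa using h2.const_mul z₀
    have hDq' : HasDerivAt q D (γ 0) := by rw [hγ0]; exact hDq
    have hg : HasDerivAt (fun t : ℝ => q (γ t)) (D * (z₀ * Complex.I)) 0 := by
      exact hDq'.comp 0 hγd
    have hre : HasDerivAt (fun t : ℝ => (q (γ t)).re) ((D * (z₀ * Complex.I)).re) 0 := by
      exact Complex.reCLM.hasFDerivAt.comp_hasDerivAt 0 hg
    have him : HasDerivAt (fun t : ℝ => (q (γ t)).im) ((D * (z₀ * Complex.I)).im) 0 := by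
      exact Complex.imCLM.hasFDerivAt.comp_hasDerivAt 0 hg
    set u : ℝ → ℝ := fun t => (q (γ t)).re * (q (γ t)).re + (q (γ t)).im * (q (γ t)).im with hu
    have hud : HasDerivAt u
        ((D * (z₀ * Complex.I)).re * (q (γ 0)).re + (q (γ 0)).re * (D * (z₀ * Complex.I)).re
        + ((D * (z₀ * Complex.I)).im * (q (γ 0)).im + (q (γ 0)).im * (D * (z₀ * Complex.I)).im)) 0 :=
      (hre.mul hre).add (him.mul him)
    have hmax : IsLocalMax u 0 := by
      apply Filter.Eventually.of_forall
      intro t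
      have h3 : u t = Complex.normSq (q (γ t)) := by rw [Complex.normSq_apply]
      have h4 : u 0 = Complex.normSq (q (γ 0)) := by rw [Complex.normSq_apply]
      rw [h3, h4, hγ0, hq₀]
      exact hbound _ (le_of_eq (hγnorm t))
    have hzero := hmax.hasDerivAt_eq_zero hud
    rw [hγ0] at hzero
    have hIre : (D * (z₀ * Complex.I)).re = -b.im := by
      rw [hb]; simp [Complex.mul_re, Complex.mul_im, Complex.I_re, Complex.I_im]; ring
    have hIim : (D * (z₀ * Complex.I)).im = b.re := by
      rw [hb]; simp [Complex.mul_re, Complex.mul_im, Complex.I_re, Complex.I_im]; ring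
    rw [hIre, hIim] at hzero
    nlinarith [hzero]
  -- radial direction
  set m : ℝ := b.re * c.re + b.im * c.im with hm
  have radial : 1 ≤ m := by
    set ρ : ℝ → ℂ := fun s => (s:ℂ) * z₀ with hρ
    have hρ1 : ρ 1 = z₀ := by simp [hρ]
    have hρd : HasDerivAt ρ z₀ 1 := by
      simpa using (Complex.ofRealCLM.hasDerivAt (x := (1:ℝ))).mul_const z₀
    have hDq' : HasDerivAt q D (ρ 1) := by rw [hρ1]; exact hDq
    have hg : HasDerivAt (fun s : ℝ => q (ρ s)) b 1 := by
      rw [hb]; exact hDq'.comp 1 hρd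
    have hre : HasDerivAt (fun s : ℝ => (q (ρ s)).re) (b.re) 1 := by
      exact Complex.reCLM.hasFDerivAt.comp_hasDerivAt 1 hg
    have him : HasDerivAt (fun s : ℝ => (q (ρ s)).im) (b.im) 1 := by
      exact Complex.imCLM.hasFDerivAt.comp_hasDerivAt 1 hg
    set v : ℝ → ℝ := fun s => (q (ρ s)).re * (q (ρ s)).re + (q (ρ s)).im * (q (ρ s)).im with hv
    have hvd : HasDerivAt v
        (b.re * (q (ρ 1)).re + (q (ρ 1)).re * b.re + (b.im * (q (ρ 1)).im + (q (ρ 1)).im * b.im)) 1 :=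
      (hre.mul hre).add (him.mul him)
    have hv1 : v 1 = 1 := by
      have : v 1 = Complex.normSq (q (ρ 1)) := by rw [Complex.normSq_apply]
      rw [this, hρ1, hq₀]
    have hslope : Tendsto (slope v 1) (𝓝[<] (1:ℝ)) (𝓝 (b.re * (q (ρ 1)).re + (q (ρ 1)).re * b.re + (b.im * (q (ρ 1)).im + (q (ρ 1)).im * b.im))) :=
      (hasDerivAt_iff_tendsto_slope.1 hvd).mono_left
        (nhdsWithin_mono _ (fun s hs => ne_of_lt hs))
    have hev : ∀ᶠ s in 𝓝[<] (1:ℝ), 1 + s ≤ slope v 1 s := by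
      filter_upwards [Ioo_mem_nhdsLT_of_mem (Set.mem_Ioc.2 ⟨zero_lt_one, le_rfl⟩)] with s hs
      have hs0 : (0:ℝ) < s := hs.1
      have hs1 : s < 1 := hs.2
      have hvs : v s ≤ s^2 := by
        have h5 : v s = Complex.normSq (q (ρ s)) := by rw [Complex.normSq_apply]
        have h6 := hschwarz s hs0.le hs1
        rw [h5, ← Complex.sq_norm]
        have h7 : (0:ℝ) ≤ ‖q (ρ s)‖ := norm_nonneg _
        nlinarith [h6, h7]
      rw [slope_def_field, le_div_iff_of_neg (by linarith : s - 1 < 0)]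
      nlinarith [hvs, hv1]
    have hlim2 : Tendsto (fun s : ℝ => 1 + s) (𝓝[<] (1:ℝ)) (𝓝 2) := by
      have h8 : Tendsto (fun s : ℝ => 1 + s) (𝓝 (1:ℝ)) (𝓝 (1+1)) :=
        (continuous_const.add continuous_id).tendsto (1:ℝ)
      norm_num at h8
      exact h8.mono_left nhdsWithin_le_nhds
    have h2le : (2:ℝ) ≤ b.re * (q (ρ 1)).re + (q (ρ 1)).re * b.re + (b.im * (q (ρ 1)).im + (q (ρ 1)).im * b.im) :=
      le_of_tendsto_of_tendsto hlim2 hslope hev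
    rw [hρ1] at h2le
    rw [hm]
    nlinarith [h2le]
  refine ⟨m, radial, ?_⟩
  have hconj : (starRingEnd ℂ) c * b = (m:ℂ) := by
    apply Complex.ext
    · simp only [Complex.mul_re, Complex.conj_re, Complex.conj_im, Complex.ofReal_re]
      rw [hm]; ring
    · simp only [Complex.mul_im, Complex.conj_re, Complex.conj_im, Complex.ofReal_im]
      nlinarith [tangential]
  have hcc : c * (starRingEnd ℂ) c = 1 := by
    rw [Complex.mul_conj, hq₀]
    norm_num
  calc z₀ * deriv q z₀ = b := by rw [hb]; ring
    _ = (c * (starRingEnd ℂ) c) * b := by rw [hcc]; ring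
    _ = c * ((starRingEnd ℂ) c * b) := by ring
    _ = c * (m:ℂ) := by rw [hconj]
    _ = (m:ℂ) * c := by ring

set_option maxHeartbeats 1000000 in
theorem stmt_2 (α β : ℝ) (hα : 0 < α) (hβ : 0 < β)
    (hcond : Real.exp 1 ≤ α * (Real.exp 1 - 1) + β * Real.exp 1)
    (p : ℂ → ℂ) (hp : DifferentiableOn ℂ p unitDisk) (hp0 : p 0 = 1)
    (hsub : Subord
      (fun z => ((1 : ℂ) - (α : ℂ)) * p z + (α : ℂ) * (p z) ^ 2 + (β : ℂ) * z * deriv p z)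
      (fun z => 1 + z)) :
    Subord p Complex.exp := by
  obtain ⟨ws, hws_diff, hws0, hws_lt, hws_eq⟩ := hsub
  have hdisk_open : IsOpen unitDisk := Metric.isOpen_ball
  have h0disk : (0:ℂ) ∈ unitDisk := by simp [unitDisk]
  set Ω : Set ℂ := {z : ℂ | 0 < z.re ∧ ‖Complex.log z‖ < 1} with hΩdef
  have hΩopen : IsOpen Ω := by
    have h1 : IsOpen {z : ℂ | 0 < z.re} := isOpen_lt continuous_const Complex.continuous_re
    have h2 : ContinuousOn Complex.log {z : ℂ | 0 < z.re} := fun z hz =>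
      (continuousAt_clog (Or.inl hz)).continuousWithinAt
    have h3 := h2.isOpen_inter_preimage h1 (Metric.isOpen_ball (x := (0:ℂ)) (ε := 1))
    have h4 : Ω = {z : ℂ | 0 < z.re} ∩ Complex.log ⁻¹' (Metric.ball 0 1) := by
      ext w
      simp [hΩdef, Metric.mem_ball, dist_zero_right]
    rw [h4]; exact h3
  have h1Ω : (1:ℂ) ∈ Ω := by
    constructor
    · simp
    · simp [Complex.log_one]
  have hpz_ne : ∀ {z : ℂ}, 0 < z.re → z ≠ 0 := by
    intro z h h0
    rw [h0] at h; simp at h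
  have hδ₀pos : (0:ℝ) < Real.exp (-1) * Real.cos 1 :=
    mul_pos (Real.exp_pos _) Real.cos_one_pos
  -- the closed envelope
  set Cs : Set ℂ := {w : ℂ | Real.exp (-1) * Real.cos 1 ≤ w.re ∧ ‖Complex.log w‖ ≤ 1} with hCsdef
  have hCs_closed : IsClosed Cs := by
    have h1 : IsClosed {w : ℂ | Real.exp (-1) * Real.cos 1 ≤ w.re} :=
      isClosed_le continuous_const Complex.continuous_re
    have h2 : ContinuousOn Complex.log {w : ℂ | Real.exp (-1) * Real.cos 1 ≤ w.re} :=
      fun w hw => (continuousAt_clog (Or.inl (lt_of_lt_of_le hδ₀pos hw))).continuousWithinAt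
    have h3 := h2.preimage_isClosed_of_isClosed h1 (Metric.isClosed_closedBall (x := (0:ℂ)) (ε := 1))
    have h4 : Cs = {w : ℂ | Real.exp (-1) * Real.cos 1 ≤ w.re}
        ∩ Complex.log ⁻¹' (Metric.closedBall 0 1) := by
      ext w
      simp [hCsdef, Metric.mem_closedBall, dist_zero_right]
    rw [h4]; exact h3
  have hΩCs : Ω ⊆ Cs := by
    rintro w ⟨hw1, hw2⟩
    have hwne : w ≠ 0 := hpz_ne hw1
    refine ⟨?_, hw2.le⟩
    have := re_exp_ge hw2.le
    rwa [Complex.exp_log hwne] at this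
  have hclΩ : closure Ω ⊆ Cs := closure_minimal hΩCs hCs_closed
  -- KEY step
  have hKEY : ∀ z ∈ unitDisk, p z ∈ Ω := by
    by_contra hcon
    push_neg at hcon
    obtain ⟨z₁, hz₁disk, hz₁not⟩ := hcon
    -- the set of good radii
    set A : Set ℝ := {t : ℝ | 0 ≤ t ∧ t < 1 ∧ ∀ z : ℂ, ‖z‖ ≤ t → p z ∈ Ω} with hAdef
    have hA_bdd : BddAbove A := ⟨1, fun t ht => ht.2.1.le⟩
    -- a small positive radius is good
    have hδex : ∃ δ : ℝ, 0 < δ ∧ δ ∈ A := by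
      have hc0 : ContinuousAt p 0 :=
        (hp.differentiableAt (hdisk_open.mem_nhds h0disk)).continuousAt
      have hnh : p ⁻¹' Ω ∈ 𝓝 (0:ℂ) :=
        hc0.preimage_mem_nhds (hΩopen.mem_nhds (by rw [hp0]; exact h1Ω))
      obtain ⟨δ', hδ'pos, hδ'sub⟩ := Metric.mem_nhds_iff.1 hnh
      refine ⟨min (δ'/2) (1/2), by positivity, ⟨by positivity, ?_, ?_⟩⟩
      · exact lt_of_le_of_lt (min_le_right _ _) (by norm_num)
      · intro z hz
        apply hδ'sub
        simp only [Metric.mem_ball, dist_zero_right]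
        calc ‖z‖ ≤ min (δ'/2) (1/2) := hz
          _ ≤ δ'/2 := min_le_left _ _
          _ < δ' := by linarith
    obtain ⟨δ, hδpos, hδA⟩ := hδex
    have hAne : A.Nonempty := ⟨δ, hδA⟩
    set r : ℝ := sSup A with hrdef
    have hrpos : 0 < r := lt_of_lt_of_le hδpos (le_csSup hA_bdd hδA)
    have hz₁norm : ‖z₁‖ < 1 := by simpa [unitDisk, Metric.mem_ball, dist_zero_right] using hz₁disk
    have hrle : r ≤ ‖z₁‖ := by
      apply csSup_le hAne
      intro t ht
      by_contra hlt
      push_neg at hlt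
      exact hz₁not (ht.2.2 z₁ hlt.le)
    have hrlt1 : r < 1 := lt_of_le_of_lt hrle hz₁norm
    have hcbdisk : Metric.closedBall (0:ℂ) r ⊆ unitDisk := by
      intro w hw
      simp only [Metric.mem_closedBall, dist_zero_right] at hw
      simp only [unitDisk, Metric.mem_ball, dist_zero_right]
      linarith
    have hin : ∀ z : ℂ, ‖z‖ < r → p z ∈ Ω := by
      intro z hz
      obtain ⟨t, htA, hzt⟩ := exists_lt_of_lt_csSup hAne hz
      exact htA.2.2 z hzt.le
    have hcl : ∀ z : ℂ, ‖z‖ ≤ r → p z ∈ closure Ω := by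
      intro z hz
      have hcont : ContinuousOn p (closure (Metric.ball (0:ℂ) r)) := by
        rw [closure_ball (0:ℂ) hrpos.ne']
        exact hp.continuousOn.mono hcbdisk
      have hz' : z ∈ closure (Metric.ball (0:ℂ) r) := by
        rw [closure_ball (0:ℂ) hrpos.ne']
        simpa [Metric.mem_closedBall, dist_zero_right] using hz
      have himg : p z ∈ closure (p '' Metric.ball (0:ℂ) r) :=
        hcont.image_closure (Set.mem_image_of_mem p hz')
      refine closure_mono ?_ himg
      rintro w ⟨w', hw', rfl⟩
      exact hin w' (by simpa [Metric.mem_ball, dist_zero_right] using hw')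
    have hCz : ∀ z : ℂ, ‖z‖ ≤ r →
        Real.exp (-1) * Real.cos 1 ≤ (p z).re ∧ ‖Complex.log (p z)‖ ≤ 1 :=
      fun z hz => hclΩ (hcl z hz)
    -- existence of a boundary point z₀
    have hz₀ex : ∃ z₀ : ℂ, ‖z₀‖ ≤ r ∧ p z₀ ∉ Ω := by
      by_contra hall
      push_neg at hall
      have hU : IsOpen (unitDisk ∩ p ⁻¹' Ω) :=
        hp.continuousOn.isOpen_inter_preimage hdisk_open hΩopen
      have hcb : IsCompact (Metric.closedBall (0:ℂ) r) := isCompact_closedBall _ _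
      have hsubU : Metric.closedBall (0:ℂ) r ⊆ unitDisk ∩ p ⁻¹' Ω := by
        intro z hz
        refine ⟨hcbdisk hz, ?_⟩
        simp only [Metric.mem_closedBall, dist_zero_right] at hz
        exact hall z hz
      obtain ⟨ε, hεpos, hεsub⟩ := hcb.exists_cthickening_subset_open hU hsubU
      have hthick : Metric.cthickening ε (Metric.closedBall (0:ℂ) r)
          = Metric.closedBall (0:ℂ) (ε + r) :=
        cthickening_closedBall hεpos.le hrpos.le (0:ℂ)
      set t : ℝ := min (r + ε) ((r+1)/2) with htdef
      have htA : t ∈ A := by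
        refine ⟨by positivity, ?_, ?_⟩
        · exact lt_of_le_of_lt (min_le_right _ _) (by linarith)
        · intro z hz
          have hz' : z ∈ Metric.closedBall (0:ℂ) (ε + r) := by
            simp only [Metric.mem_closedBall, dist_zero_right]
            calc ‖z‖ ≤ t := hz
              _ ≤ r + ε := min_le_left _ _
              _ = ε + r := by ring
          rw [← hthick] at hz'
          exact (hεsub hz').2
      have h1 : t ≤ r := le_csSup hA_bdd htA
      have h2 : r < t := lt_min (by linarith) (by linarith)
      linarith
    obtain ⟨z₀, hz₀le, hz₀not⟩ := hz₀ex
    -- the log-composition q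
    set q : ℂ → ℂ := fun z => Complex.log (p z) with hqdef
    set V : Set ℂ := unitDisk ∩ p ⁻¹' {w : ℂ | 0 < w.re} with hVdef
    have hVopen : IsOpen V :=
      hp.continuousOn.isOpen_inter_preimage hdisk_open
        (isOpen_lt continuous_const Complex.continuous_re)
    have hballV : Metric.closedBall (0:ℂ) r ⊆ V := by
      intro z hz
      have hz' : ‖z‖ ≤ r := by simpa [Metric.mem_closedBall, dist_zero_right] using hz
      exact ⟨hcbdisk hz, lt_of_lt_of_le hδ₀pos (hCz z hz').1⟩
    have hqdiffV : DifferentiableOn ℂ q V := by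
      intro z hz
      exact ((hp.differentiableAt (hdisk_open.mem_nhds hz.1)).clog
        (Or.inl hz.2)).differentiableWithinAt
    have hq0 : q 0 = 0 := by rw [hqdef]; simp [hp0, Complex.log_one]
    have hqbound : ∀ z : ℂ, ‖z‖ ≤ r → Complex.normSq (q z) ≤ 1 := by
      intro z hz
      have h5 := (hCz z hz).2
      rw [← Complex.sq_norm]
      nlinarith [norm_nonneg (q z)]
    have hsch : ∀ z ∈ Metric.ball (0:ℂ) r, ‖q z‖ ≤ ‖z‖ / r := by
      intro z hz
      refine schwarz_cb hrpos (hqdiffV.mono ?_) hq0 ?_ hz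
      · exact fun w hw => hballV (Metric.ball_subset_closedBall hw)
      · intro w hw
        have hw' : ‖w‖ ≤ r := by
          have := Metric.ball_subset_closedBall hw
          simpa [Metric.mem_closedBall, dist_zero_right] using this
        exact (hCz w hw').2
    have hq₀norm : ‖q z₀‖ = 1 := by
      have hle := (hCz z₀ hz₀le).2
      rcases lt_or_eq_of_le hle with hlt | heq
      · exfalso
        apply hz₀not
        exact ⟨lt_of_lt_of_le hδ₀pos (hCz z₀ hz₀le).1, hlt⟩
      · exact heq
    have hq₀sq : Complex.normSq (q z₀) = 1 := by
      rw [← Complex.sq_norm, hq₀norm]; norm_num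
    have hz₀r : ‖z₀‖ = r := by
      rcases lt_or_eq_of_le hz₀le with hlt | heq
      · exfalso
        have h6 := hsch z₀ (by simpa [Metric.mem_ball, dist_zero_right] using hlt)
        rw [hq₀norm] at h6
        have h7 : ‖z₀‖ / r < 1 := by rw [div_lt_one hrpos]; exact hlt
        linarith
      · exact heq
    have hjsch : ∀ s : ℝ, 0 ≤ s → s < 1 → ‖q ((s:ℂ) * z₀)‖ ≤ s := by
      intro s hs0 hs1
      have hnorm : ‖(s:ℂ) * z₀‖ = s * r := by
        rw [norm_mul, Complex.norm_real, Real.norm_eq_abs, _root_.abs_of_nonneg hs0, hz₀r]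
      have hmem : (s:ℂ) * z₀ ∈ Metric.ball (0:ℂ) r := by
        simp only [Metric.mem_ball, dist_zero_right, hnorm]
        nlinarith
      have := hsch _ hmem
      rw [hnorm] at this
      calc ‖q ((s:ℂ) * z₀)‖ ≤ s * r / r := this
        _ = s := by field_simp
    obtain ⟨m, hm1, hmeq⟩ := jack_lemma hVopen hqdiffV hrpos hballV hz₀r hqbound hq₀sq hjsch
    -- derivative transfer
    have hz₀disk : z₀ ∈ unitDisk := by
      simp only [unitDisk, Metric.mem_ball, dist_zero_right, hz₀r]
      exact hrlt1
    have hpz₀re : 0 < (p z₀).re := lt_of_lt_of_le hδ₀pos (hCz z₀ hz₀le).1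
    have hpz₀ne : p z₀ ≠ 0 := hpz_ne hpz₀re
    have hPd : HasDerivAt p (deriv p z₀) z₀ :=
      (hp.differentiableAt (hdisk_open.mem_nhds hz₀disk)).hasDerivAt
    have hqd : HasDerivAt q (deriv p z₀ / p z₀) z₀ := hPd.clog (Or.inl hpz₀re)
    have hderiv_q : deriv q z₀ = deriv p z₀ / p z₀ := hqd.deriv
    rw [hderiv_q] at hmeq
    have hzP : z₀ * deriv p z₀ = (m:ℂ) * (q z₀) * p z₀ := by
      field_simp [hpz₀ne] at hmeq
      linear_combination hmeq
    have hexp_q : Complex.exp (q z₀) = p z₀ := Complex.exp_log hpz₀ne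
    have hadm := norm_admissible hα hβ hm1 hcond (q z₀) hq₀norm
    have heq := hws_eq z₀ hz₀disk
    have hwlt := hws_lt z₀ hz₀disk
    simp only at heq
    have hExpr : ((1:ℂ) - (α:ℂ)) * Complex.exp (q z₀) + (α:ℂ) * (Complex.exp (q z₀))^2
        + ((β:ℂ) * ((m:ℂ) * (q z₀ * Complex.exp (q z₀)))) - 1 = ws z₀ := by
      rw [hexp_q]
      have h8 : (β:ℂ) * ((m:ℂ) * (q z₀ * p z₀)) = (β:ℂ) * (z₀ * deriv p z₀) := by
        rw [hzP]; ring
      rw [h8]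
      linear_combination heq
    rw [hExpr] at hadm
    linarith
  -- conclusion: log ∘ p is the required function
  refine ⟨fun z => Complex.log (p z), ?_, ?_, ?_, ?_⟩
  · intro z hz
    exact ((hp.differentiableAt (hdisk_open.mem_nhds hz)).clog
      (Or.inl (hKEY z hz).1)).differentiableWithinAt
  · show Complex.log (p 0) = 0
    rw [hp0, Complex.log_one]
  · intro z hz
    exact (hKEY z hz).2
  · intro z hz
    exact (Complex.exp_log (hpz_ne (hKEY z hz).1)).symm
end
end

section
/- Let β be a real number with β ≥ (e + 2 − √2·(e−1)) / (e·(√2 − 1)), and let p ∈ H₁. If the function z ↦ p(z) + β·z·p′(z) is subordinate to z ↦ (2+2z)/(2−z) on 𝔻, then p is subordinate to z ↦ e^z on 𝔻. -/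
open Complex

noncomputable section

open intervalIntegral MeasureTheory


lemma aux_beta (β : ℝ)
    (hβ : (Real.exp 1 + 2 - Real.sqrt 2 * (Real.exp 1 - 1)) /
        (Real.exp 1 * (Real.sqrt 2 - 1)) ≤ β) : 2 ≤ β := by
  have he1 : (2.7182818283 : ℝ) < Real.exp 1 := Real.exp_one_gt_d9
  have he2 : Real.exp 1 < 2.7182818286 := Real.exp_one_lt_d9
  have hs : Real.sqrt 2 ^ 2 = 2 := Real.sq_sqrt (by norm_num)
  have hsnn : 0 ≤ Real.sqrt 2 := Real.sqrt_nonneg 2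
  have hs1 : (1.414 : ℝ) < Real.sqrt 2 := by nlinarith
  have hs2 : Real.sqrt 2 < 1.415 := by nlinarith
  have hden : 0 < Real.exp 1 * (Real.sqrt 2 - 1) := by nlinarith
  rw [div_le_iff₀ hden] at hβ
  nlinarith

lemma aux_mobius (w : ℂ) (σ : ℝ) (h1 : ‖w‖ ≤ σ) (h2 : ‖w‖ < 1) (h3 : σ ≤ 1) :
    ‖((2 + 2*w)/(2 - w) - (((4 + 2*σ^2)/(4 - σ^2) : ℝ) : ℂ))‖ ≤ 6*σ/(4 - σ^2) := by
  have hσ0 : 0 ≤ σ := le_trans (norm_nonneg w) h1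
  have hσ4 : (0:ℝ) < 4 - σ^2 := by nlinarith
  have hw2 : (2 : ℂ) - w ≠ 0 := by
    intro h
    have hw : w = 2 := by linear_combination -h
    rw [hw] at h2
    simp [Complex.norm_two] at h2
  have habs2 : (0:ℝ) < ‖(2 - w)‖ := by
    simpa [norm_pos_iff] using hw2
  have h4R : ((4 - σ^2 : ℝ) : ℂ) ≠ 0 := Complex.ofReal_ne_zero.mpr (ne_of_gt hσ4)
  have hid : (2 + 2*w)/(2 - w) - (((4 + 2*σ^2)/(4 - σ^2) : ℝ) : ℂ)
      = (6*(2*w - ((σ^2:ℝ):ℂ))) / ((2 - w) * ((4 - σ^2 : ℝ) : ℂ)) := by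
    rw [Complex.ofReal_div, div_sub_div _ _ hw2 h4R]
    congr 1
    push_cast
    ring
  rw [hid]
  rw [norm_div, norm_mul, norm_mul]
  have hkey : ‖(2*w - ((σ^2:ℝ):ℂ))‖ ≤ σ * ‖(2 - w)‖ := by
    have hsq : ‖w‖ ^ 2 ≤ σ^2 := by nlinarith [norm_nonneg w]
    rw [Complex.sq_norm] at hsq
    have hnsq : Complex.normSq (2*w - ((σ^2:ℝ):ℂ)) ≤ σ^2 * Complex.normSq (2 - w) := by
      simp only [Complex.normSq_apply, Complex.sub_re, Complex.sub_im, Complex.mul_re,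
        Complex.mul_im, Complex.ofReal_re, Complex.ofReal_im] at hsq ⊢
      norm_num
      nlinarith [hsq, sq_nonneg (w.re), sq_nonneg (w.im)]
    calc ‖(2*w - ((σ^2:ℝ):ℂ))‖ = Real.sqrt (Complex.normSq (2*w - ((σ^2:ℝ):ℂ))) := by
          rw [Complex.norm_def]
      _ ≤ Real.sqrt (σ^2 * Complex.normSq (2 - w)) := Real.sqrt_le_sqrt hnsq
      _ = σ * ‖(2 - w)‖ := by
          rw [Real.sqrt_mul (by positivity), Real.sqrt_sq hσ0, Complex.norm_def]
  have h6 : ‖(6 : ℂ)‖ = 6 := by simp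
  have habs4 : ‖((4 - σ^2 : ℝ) : ℂ)‖ = 4 - σ^2 := by
    rw [Complex.norm_real, Real.norm_eq_abs, abs_of_pos hσ4]
  rw [h6, habs4, div_le_div_iff₀ (by positivity) hσ4]
  nlinarith [hkey, habs2]

set_option maxHeartbeats 1000000 in
lemma aux_region (ζ : ℂ) (C R : ℝ) (hC : 1 ≤ C) (hR0 : 0 ≤ R)
    (hball : ‖(ζ - (C:ℂ))‖ ≤ R)
    (hlo : 167/280 ≤ C - R) (hhi : C + R ≤ 733/420) :
    0 < ζ.re ∧ ‖(Complex.log ζ)‖ < 1 := by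
  have h1 : ‖(ζ - (C:ℂ))‖ ^ 2 ≤ R^2 := by
    nlinarith [norm_nonneg (ζ - (C:ℂ))]
  rw [Complex.sq_norm, Complex.normSq_apply] at h1
  simp only [Complex.sub_re, Complex.ofReal_re, Complex.sub_im, Complex.ofReal_im,
    sub_zero] at h1
  have hball2 : (ζ.re - C)^2 + ζ.im^2 ≤ R^2 := by nlinarith [h1]
  have hx : 167/280 ≤ ζ.re := by nlinarith [sq_nonneg ζ.im, sq_nonneg (ζ.re - C)]
  have hx0 : (0:ℝ) < ζ.re := by linarith
  have hRC : R ≤ C := by linarith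
  have habsC : ‖((C:ℂ))‖ = C := by
    rw [Complex.norm_real, Real.norm_eq_abs, _root_.abs_of_pos (by linarith)]
  have habs_up : ‖ζ‖ ≤ 733/420 := by
    have h2 : ‖ζ‖ ≤ ‖(ζ - (C:ℂ))‖ + ‖((C:ℂ))‖ := by
      have := norm_add_le (ζ - (C:ℂ)) ((C:ℂ))
      simpa using this
    rw [habsC] at h2; linarith
  have habs_lo : 167/280 ≤ ‖ζ‖ := by
    have h2 : ‖((C:ℂ))‖ ≤ ‖((C:ℂ) - ζ)‖ + ‖ζ‖ := by
      have := norm_add_le ((C:ℂ) - ζ) ζ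
      simpa using this
    have h3 : ‖((C:ℂ) - ζ)‖ = ‖(ζ - (C:ℂ))‖ :=
      norm_sub_rev _ _
    rw [habsC, h3] at h2; linarith
  have habs_pos : (0:ℝ) < ‖ζ‖ := by linarith
  -- tangent line bound
  have hCR2 : 167/280 ≤ C^2 - R^2 := by nlinarith
  have htan : ζ.im^2 * (C^2 - R^2) ≤ R^2 * ζ.re^2 := by
    have hprod : 0 ≤ (C^2 - R^2) * (R^2 - (ζ.re - C)^2 - ζ.im^2) := by
      apply mul_nonneg (by linarith) (by linarith)
    nlinarith [sq_nonneg (C*(ζ.re - C) + R^2), hprod]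
  have hRsmall : R ≤ 193/336 := by linarith
  have hy2 : ζ.im^2 * (167/280) ≤ (193/336)^2 * ζ.re^2 := by
    have s1 : ζ.im^2 * (167/280) ≤ ζ.im^2 * (C^2 - R^2) :=
      mul_le_mul_of_nonneg_left hCR2 (sq_nonneg _)
    have s2 : R^2 * ζ.re^2 ≤ (193/336)^2 * ζ.re^2 := by
      apply mul_le_mul_of_nonneg_right _ (sq_nonneg _)
      nlinarith
    linarith
  -- log modulus bounds
  have hexp : (23/20:ℝ)^4 ≤ Real.exp (3/5) := by
    have h1' : (23/20:ℝ) ≤ Real.exp (3/20) := by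
      nlinarith [Real.add_one_le_exp (3/20:ℝ)]
    have h2' : ((4:ℕ):ℝ) * (3/20) = 3/5 := by norm_num
    calc (23/20:ℝ)^4 ≤ Real.exp (3/20) ^ 4 := by
          exact pow_le_pow_left₀ (by norm_num) h1' 4
      _ = Real.exp (((4:ℕ):ℝ) * (3/20)) := by rw [Real.exp_nat_mul]
      _ = Real.exp (3/5) := by rw [h2']
  have hlog_up : Real.log (‖ζ‖) ≤ 3/5 := by
    rw [Real.log_le_iff_le_exp habs_pos]
    calc ‖ζ‖ ≤ 733/420 := habs_up
      _ ≤ (23/20:ℝ)^4 := by norm_num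
      _ ≤ Real.exp (3/5) := hexp
  have hlog_lo : -(3/5) ≤ Real.log (‖ζ‖) := by
    rw [Real.le_log_iff_exp_le habs_pos, Real.exp_neg]
    have hpos4 : (0:ℝ) < (23/20:ℝ)^4 := by norm_num
    calc (Real.exp (3/5))⁻¹ ≤ ((23/20:ℝ)^4)⁻¹ := by
          exact inv_anti₀ hpos4 hexp
      _ ≤ 167/280 := by norm_num
      _ ≤ ‖ζ‖ := habs_lo
  -- argument bound
  have harg_lt : |Complex.arg ζ| < Real.pi/2 :=
    Complex.abs_arg_lt_pi_div_two_iff.mpr (Or.inl hx0)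
  have htan_arg : Real.tan (Complex.arg ζ) = ζ.im / ζ.re := Complex.tan_arg ζ
  have habs_arg : |Complex.arg ζ| ≤ |ζ.im| / ζ.re := by
    rcases le_or_gt 0 (Complex.arg ζ) with h | h
    · rw [_root_.abs_of_nonneg h]
      have h1' : Complex.arg ζ ≤ Real.tan (Complex.arg ζ) :=
        Real.le_tan h (lt_of_le_of_lt (le_abs_self _) harg_lt)
      rw [htan_arg] at h1'
      have h2' : ζ.im / ζ.re ≤ |ζ.im| / ζ.re := by
        gcongr
        exact le_abs_self _
      linarith
    · rw [_root_.abs_of_neg h]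
      have hlt2 : -Complex.arg ζ < Real.pi / 2 :=
        lt_of_le_of_lt (neg_le_abs _) harg_lt
      have h1' : -Complex.arg ζ ≤ Real.tan (-Complex.arg ζ) :=
        Real.le_tan (by linarith) hlt2
      rw [Real.tan_neg, htan_arg] at h1'
      have h2' : -(ζ.im / ζ.re) ≤ |ζ.im| / ζ.re := by
        rw [neg_div']
        gcongr
        exact neg_le_abs _
      linarith
  have harg_sq : (Complex.arg ζ)^2 ≤ ζ.im^2 / ζ.re^2 := by
    calc (Complex.arg ζ)^2 = |Complex.arg ζ|^2 := (_root_.sq_abs _).symm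
      _ ≤ (|ζ.im| / ζ.re)^2 := pow_le_pow_left₀ (abs_nonneg _) habs_arg 2
      _ = ζ.im^2 / ζ.re^2 := by rw [div_pow, _root_.sq_abs]
  have hargK : (Complex.arg ζ)^2 ≤ (193/336:ℝ)^2 * (280/167) := by
    have hx2 : (0:ℝ) < ζ.re^2 := by positivity
    have h3 : ζ.im^2 / ζ.re^2 ≤ (193/336:ℝ)^2 * (280/167) := by
      rw [div_le_iff₀ hx2]
      nlinarith [hy2]
    linarith
  have hL2 : (Real.log (‖ζ‖))^2 ≤ 9/25 := by nlinarith [hlog_up, hlog_lo]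
  refine ⟨hx0, ?_⟩
  have hnormSq : Complex.normSq (Complex.log ζ) =
      (Real.log (‖ζ‖))^2 + (Complex.arg ζ)^2 := by
    rw [Complex.normSq_apply, Complex.log_re, Complex.log_im]; ring
  have hlt1 : ‖(Complex.log ζ)‖ ^ 2 < 1 := by
    rw [Complex.sq_norm, hnormSq]
    nlinarith [hargK, hL2]
  nlinarith [norm_nonneg (Complex.log ζ), hlt1]


lemma aux_poly_int (β : ℝ) (hβ2 : 2 ≤ β) (a0 a1 a2 a3 a4 : ℝ) :
    ∫ u in (0:ℝ)..1, (a0 + a1*u^β + a2*u^(β*2) + a3*u^(β*3) + a4*u^(β*4))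
      = a0 + a1*(1/(β+1)) + a2*(1/(β*2+1)) + a3*(1/(β*3+1)) + a4*(1/(β*4+1)) := by
  have hβnn : (0:ℝ) ≤ β := by linarith
  have hIr : ∀ k : ℝ, 1 ≤ k → ∫ u in (0:ℝ)..1, u ^ (β*k) = 1/(β*k+1) := by
    intro k hk
    have hne : β*k + 1 ≠ 0 := by nlinarith
    rw [integral_rpow (Or.inl (by nlinarith : (-1:ℝ) < β*k))]
    rw [Real.one_rpow, Real.zero_rpow hne]
    norm_num
  have hintk : ∀ k : ℝ, 0 ≤ k → IntervalIntegrable (fun u:ℝ => u^(β*k)) volume 0 1 :=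
    fun k hk => (Real.continuous_rpow_const (by nlinarith)).intervalIntegrable 0 1
  have hint1 : IntervalIntegrable (fun u:ℝ => u^β) volume 0 1 :=
    (Real.continuous_rpow_const hβnn).intervalIntegrable 0 1
  have hI1 : ∫ u in (0:ℝ)..1, u ^ β = 1/(β+1) := by
    have := hIr 1 le_rfl
    rw [mul_one] at this
    exact this
  rw [intervalIntegral.integral_add, intervalIntegral.integral_add,
    intervalIntegral.integral_add, intervalIntegral.integral_add]
  · rw [intervalIntegral.integral_const, intervalIntegral.integral_const_mul,
      intervalIntegral.integral_const_mul, intervalIntegral.integral_const_mul,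
      intervalIntegral.integral_const_mul, hI1, hIr 2 (by norm_num),
      hIr 3 (by norm_num), hIr 4 (by norm_num)]
    simp
  · exact intervalIntegrable_const
  · exact (hint1.const_mul a1)
  · exact intervalIntegrable_const.add (hint1.const_mul a1)
  · exact (hintk 2 (by norm_num)).const_mul a2
  · exact (intervalIntegrable_const.add (hint1.const_mul a1)).add
      ((hintk 2 (by norm_num)).const_mul a2)
  · exact (hintk 3 (by norm_num)).const_mul a3
  · exact ((intervalIntegrable_const.add (hint1.const_mul a1)).add
      ((hintk 2 (by norm_num)).const_mul a2)).add ((hintk 3 (by norm_num)).const_mul a3)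
  · exact (hintk 4 (by norm_num)).const_mul a4

set_option maxHeartbeats 2000000 in
lemma aux_main (β : ℝ) (hβ2 : 2 ≤ β) (p : ℂ → ℂ) (hp : DifferentiableOn ℂ p unitDisk)
    (hPb : ∀ ζ ∈ unitDisk, ∀ σ : ℝ, ‖ζ‖ ≤ σ → σ ≤ 1 →
      ‖((p ζ + (β:ℂ) * ζ * deriv p ζ) - (((4 + 2*σ^2)/(4 - σ^2) : ℝ):ℂ))‖
        ≤ 6*σ/(4 - σ^2))
    (z : ℂ) (hz : z ∈ unitDisk) :
    ∃ C R : ℝ, 1 ≤ C ∧ 0 ≤ R ∧ ‖(p z - (C:ℂ))‖ ≤ R ∧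
      167/280 ≤ C - R ∧ C + R ≤ 733/420 := by
  have hβ0 : (0:ℝ) < β := by linarith
  have hβnn : (0:ℝ) ≤ β := le_of_lt hβ0
  have hopen : IsOpen unitDisk := Metric.isOpen_ball
  have hzabs : ‖z‖ < 1 := by
    simpa [unitDisk, Metric.mem_ball, Complex.dist_eq] using hz
  set P : ℂ → ℂ := fun ζ => p ζ + (β:ℂ) * ζ * deriv p ζ with hPdef
  have hpa : AnalyticOnNhd ℂ p unitDisk := hp.analyticOnNhd hopen
  have hp' : DifferentiableOn ℂ (deriv p) unitDisk := (hpa.deriv).differentiableOn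
  have hPcont : ContinuousOn P unitDisk := by
    apply ContinuousOn.add hp.continuousOn
    exact (continuousOn_const.mul continuousOn_id).mul hp'.continuousOn
  set g : ℝ → ℂ := fun u => ((u ^ β : ℝ) : ℂ) * z with hgdef
  have hrpow_cont : Continuous (fun u : ℝ => u ^ β) := Real.continuous_rpow_const hβnn
  have hg_cont : Continuous g :=
    (Complex.continuous_ofReal.comp hrpow_cont).mul continuous_const
  have hg_abs : ∀ u : ℝ, 0 ≤ u → ‖(g u)‖ = u ^ β * ‖z‖ := by
    intro u hu
    simp only [hgdef, norm_mul, Complex.norm_real, Real.norm_eq_abs]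
    rw [_root_.abs_of_nonneg (Real.rpow_nonneg hu β)]
  have hg_mem : ∀ u : ℝ, 0 ≤ u → u ≤ 1 → g u ∈ unitDisk := by
    intro u hu0 hu1
    have h1 : u ^ β ≤ 1 := Real.rpow_le_one hu0 hu1 hβnn
    have h2 : ‖(g u)‖ < 1 := by
      rw [hg_abs u hu0]
      calc u ^ β * ‖z‖ ≤ 1 * ‖z‖ :=
            mul_le_mul_of_nonneg_right h1 (norm_nonneg z)
        _ = ‖z‖ := one_mul _
        _ < 1 := hzabs
    simpa [unitDisk, Metric.mem_ball, Complex.dist_eq] using h2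
  -- derivative of u ↦ u * p (g u)
  have hderiv : ∀ u ∈ Set.uIcc (0:ℝ) 1,
      HasDerivAt (fun v : ℝ => (v:ℂ) * p (g v)) (P (g u)) u := by
    intro u hu
    rw [Set.uIcc_of_le (by norm_num : (0:ℝ) ≤ 1)] at hu
    obtain ⟨hu0, hu1⟩ := hu
    have hrpow : HasDerivAt (fun v:ℝ => v ^ β) (β * u ^ (β - 1)) u :=
      Real.hasDerivAt_rpow_const (Or.inr (by linarith))
    have hrpowC : HasDerivAt (fun v:ℝ => ((v ^ β : ℝ) : ℂ)) ((β * u ^ (β-1) : ℝ) : ℂ) u :=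
      hrpow.ofReal_comp
    have hgz : HasDerivAt g (((β * u ^ (β-1) : ℝ) : ℂ) * z) u := hrpowC.mul_const z
    have hmem : g u ∈ unitDisk := hg_mem u hu0 hu1
    have hpd : HasDerivAt p (deriv p (g u)) (g u) :=
      (hp.differentiableAt (hopen.mem_nhds hmem)).hasDerivAt
    have hcomp : HasDerivAt (fun v : ℝ => p (g v))
        ((((β * u ^ (β-1):ℝ):ℂ) * z) • deriv p (g u)) u := hpd.scomp u hgz
    have hid : HasDerivAt (fun v:ℝ => (v:ℂ)) 1 u := by
      simpa using (hasDerivAt_id u).ofReal_comp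
    have hmul := hid.mul hcomp
    have hreal : u * (β * u^(β-1)) = β * u^β := by
      rcases eq_or_lt_of_le hu0 with h|h
      · subst h
        rw [Real.zero_rpow (by intro hc; linarith : β - 1 ≠ 0),
          Real.zero_rpow (by intro hc; linarith : β ≠ 0)]
        ring
      · have h2 : u ^ (β - 1) * u ^ (1:ℝ) = u ^ β := by
          rw [← Real.rpow_add h]; norm_num
        rw [Real.rpow_one] at h2
        rw [← h2]; ring
    have hcast : ((u:ℝ):ℂ) * ((β * u ^ (β-1) : ℝ) : ℂ) = ((β:ℝ):ℂ) * ((u ^ β : ℝ):ℂ) := by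
      rw [← Complex.ofReal_mul, ← Complex.ofReal_mul, hreal]
    have hval : P (g u) = 1 * p (g u)
        + (u:ℂ) * ((((β * u ^ (β-1):ℝ):ℂ) * z) • deriv p (g u)) := by
      simp only [hPdef, hgdef, smul_eq_mul, one_mul]
      linear_combination (-(z * deriv p (((u ^ β : ℝ):ℂ) * z))) * hcast
    rw [hval]
    exact hmul
  -- FTC
  have hPg_cont : ContinuousOn (fun u : ℝ => P (g u)) (Set.uIcc (0:ℝ) 1) := by
    apply hPcont.comp hg_cont.continuousOn
    intro u hu
    rw [Set.uIcc_of_le (by norm_num : (0:ℝ) ≤ 1)] at hu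
    exact hg_mem u hu.1 hu.2
  have hint_Pg : IntervalIntegrable (fun u : ℝ => P (g u)) volume 0 1 :=
    hPg_cont.intervalIntegrable
  have hFTC : ∫ u in (0:ℝ)..1, P (g u) = p z := by
    rw [intervalIntegral.integral_eq_sub_of_hasDerivAt hderiv hint_Pg]
    have h1 : g 1 = z := by simp [hgdef, Real.one_rpow]
    rw [h1]
    norm_num
  -- bounds on u^β
  have hubound : ∀ u ∈ Set.uIcc (0:ℝ) 1, 0 ≤ u ^ β ∧ u ^ β ≤ 1 := by
    intro u hu
    rw [Set.uIcc_of_le (by norm_num : (0:ℝ) ≤ 1)] at hu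
    exact ⟨Real.rpow_nonneg hu.1 β, Real.rpow_le_one hu.1 hu.2 hβnn⟩
  have hden : ∀ u ∈ Set.uIcc (0:ℝ) 1, 4 - (u^β)^2 ≠ 0 := by
    intro u hu
    obtain ⟨h0, h1⟩ := hubound u hu
    nlinarith
  have hcont_c : ContinuousOn (fun u : ℝ => (4 + 2*(u^β)^2)/(4 - (u^β)^2))
      (Set.uIcc (0:ℝ) 1) := by
    apply ContinuousOn.div
    · exact (continuous_const.add (continuous_const.mul (hrpow_cont.pow 2))).continuousOn
    · exact (continuous_const.sub (hrpow_cont.pow 2)).continuousOn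
    · exact hden
  have hcont_r : ContinuousOn (fun u : ℝ => 6*(u^β)/(4 - (u^β)^2))
      (Set.uIcc (0:ℝ) 1) := by
    apply ContinuousOn.div
    · exact (continuous_const.mul hrpow_cont).continuousOn
    · exact (continuous_const.sub (hrpow_cont.pow 2)).continuousOn
    · exact hden
  have hint_c : IntervalIntegrable (fun u : ℝ => (4 + 2*(u^β)^2)/(4 - (u^β)^2)) volume 0 1 :=
    hcont_c.intervalIntegrable
  have hint_r : IntervalIntegrable (fun u : ℝ => 6*(u^β)/(4 - (u^β)^2)) volume 0 1 :=
    hcont_r.intervalIntegrable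
  have hint_cC : IntervalIntegrable
      (fun u : ℝ => (((4 + 2*(u^β)^2)/(4 - (u^β)^2) : ℝ) : ℂ)) volume 0 1 :=
    (Complex.continuous_ofReal.comp_continuousOn hcont_c).intervalIntegrable
  set Creal := ∫ u in (0:ℝ)..1, (4 + 2*(u^β)^2)/(4 - (u^β)^2) with hCdef
  set Rreal := ∫ u in (0:ℝ)..1, 6*(u^β)/(4 - (u^β)^2) with hRdef
  -- pointwise bound
  have hptw : ∀ u ∈ Set.uIcc (0:ℝ) 1,
      ‖(P (g u) - (((4 + 2*(u^β)^2)/(4 - (u^β)^2) : ℝ):ℂ))‖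
        ≤ 6*(u^β)/(4 - (u^β)^2) := by
    intro u hu
    obtain ⟨h0, h1⟩ := hubound u hu
    rw [Set.uIcc_of_le (by norm_num : (0:ℝ) ≤ 1)] at hu
    have habs : ‖(g u)‖ ≤ u ^ β := by
      rw [hg_abs u hu.1]
      exact mul_le_of_le_one_right h0 (le_of_lt hzabs)
    exact hPb (g u) (hg_mem u hu.1 hu.2) (u^β) habs h1
  -- |p z - Creal| ≤ Rreal
  have hdiffint : p z - ((Creal : ℝ):ℂ)
      = ∫ u in (0:ℝ)..1, (P (g u) - (((4 + 2*(u^β)^2)/(4 - (u^β)^2) : ℝ):ℂ)) := by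
    rw [intervalIntegral.integral_sub hint_Pg hint_cC, hFTC]
    congr 1
    rw [hCdef]
    exact (intervalIntegral.integral_ofReal).symm
  -- scalar bounds
  have hC1 : 1 ≤ Creal := by
    have h1 : (1:ℝ) = ∫ u in (0:ℝ)..1, (1:ℝ) := by simp
    rw [h1, hCdef]
    apply intervalIntegral.integral_mono_on (by norm_num) intervalIntegrable_const hint_c
    intro u hu
    have := hubound u (by rw [Set.uIcc_of_le (by norm_num : (0:ℝ) ≤ 1)]; exact hu)
    obtain ⟨h0, hle1⟩ := this
    rw [le_div_iff₀ (by nlinarith)]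
    nlinarith
  have hR0 : 0 ≤ Rreal := by
    have h1 : (0:ℝ) = ∫ u in (0:ℝ)..1, (0:ℝ) := by simp
    rw [h1, hRdef]
    apply intervalIntegral.integral_mono_on (by norm_num) intervalIntegrable_const hint_r
    intro u hu
    have := hubound u (by rw [Set.uIcc_of_le (by norm_num : (0:ℝ) ≤ 1)]; exact hu)
    obtain ⟨h0, hle1⟩ := this
    apply div_nonneg (by linarith) (by nlinarith)
  have hnorm : ‖(p z - ((Creal : ℝ):ℂ))‖ ≤ Rreal := by
    have hle : ‖∫ u in (0:ℝ)..1, (P (g u) - (((4 + 2*(u^β)^2)/(4 - (u^β)^2) : ℝ):ℂ))‖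
        ≤ |∫ u in (0:ℝ)..1, 6*(u^β)/(4 - (u^β)^2)| := by
      apply intervalIntegral.norm_integral_le_abs_of_norm_le
      · filter_upwards [ae_restrict_mem measurableSet_uIoc] with u hu
        have hu' : u ∈ Set.uIcc (0:ℝ) 1 := by
          rw [Set.uIoc_of_le (by norm_num : (0:ℝ) ≤ 1)] at hu
          rw [Set.uIcc_of_le (by norm_num : (0:ℝ) ≤ 1)]
          exact ⟨le_of_lt hu.1, hu.2⟩
        exact hptw u hu'
      · exact hint_r
    rw [← hdiffint] at hle
    rw [_root_.abs_of_nonneg (by rw [hRdef] at hR0; exact hR0)] at hle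
    exact hle
  -- lower bound for Creal - Rreal
  have hlow : 1 - 3/2*(1/(β+1)) + 3/4*(1/(β*2+1)) - 3/8*(1/(β*3+1)) ≤ Creal - Rreal := by
    have e1 : Creal - Rreal = ∫ u in (0:ℝ)..1,
        ((4 + 2*(u^β)^2)/(4 - (u^β)^2) - 6*(u^β)/(4 - (u^β)^2)) :=
      (intervalIntegral.integral_sub hint_c hint_r).symm
    have e2 : ∫ u in (0:ℝ)..1,
        (1 + (-(3/2))*u^β + (3/4)*u^(β*2) + (-(3/8))*u^(β*3) + (0:ℝ)*u^(β*4))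
        = 1 + (-(3/2))*(1/(β+1)) + (3/4)*(1/(β*2+1)) + (-(3/8))*(1/(β*3+1))
          + 0*(1/(β*4+1)) := aux_poly_int β hβ2 1 (-(3/2)) (3/4) (-(3/8)) 0
    rw [e1]
    have hmono : ∫ u in (0:ℝ)..1,
        (1 + (-(3/2))*u^β + (3/4)*u^(β*2) + (-(3/8))*u^(β*3) + (0:ℝ)*u^(β*4))
        ≤ ∫ u in (0:ℝ)..1,
        ((4 + 2*(u^β)^2)/(4 - (u^β)^2) - 6*(u^β)/(4 - (u^β)^2)) := by
      apply intervalIntegral.integral_mono_on (by norm_num)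
      · have : Continuous (fun u:ℝ =>
            1 + (-(3/2))*u^β + (3/4)*u^(β*2) + (-(3/8))*u^(β*3) + (0:ℝ)*u^(β*4)) := by
          apply Continuous.add
          apply Continuous.add
          apply Continuous.add
          · exact continuous_const.add (continuous_const.mul hrpow_cont)
          · exact continuous_const.mul (Real.continuous_rpow_const (by linarith))
          · exact continuous_const.mul (Real.continuous_rpow_const (by linarith))
          · exact continuous_const.mul (Real.continuous_rpow_const (by linarith))
        exact this.intervalIntegrable 0 1
      · exact hint_c.sub hint_r
      · intro u hu
        have huu : u ∈ Set.uIcc (0:ℝ) 1 := by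
          rw [Set.uIcc_of_le (by norm_num : (0:ℝ) ≤ 1)]; exact hu
        obtain ⟨h0, h1⟩ := hubound u huu
        have hpow2 : u^(β*2) = (u^β)^2 := by
          rw [Real.rpow_mul hu.1, Real.rpow_two]
        have hpow3 : u^(β*3) = (u^β)^3 := by
          rw [Real.rpow_mul hu.1]
          rw [show ((3:ℝ)) = ((3:ℕ):ℝ) by norm_num, Real.rpow_natCast]
        rw [hpow2, hpow3, div_sub_div_same, le_div_iff₀ (by nlinarith)]
        nlinarith [mul_nonneg (pow_nonneg h0 4) (by linarith : (0:ℝ) ≤ 2 - u^β)]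
    rw [e2] at hmono
    linarith [hmono]
  -- upper bound for Creal + Rreal
  have hhigh : Creal + Rreal ≤ 1 + 3/2*(1/(β+1)) + 3/4*(1/(β*2+1)) + 3/8*(1/(β*3+1))
      + 3/8*(1/(β*4+1)) := by
    have e1 : Creal + Rreal = ∫ u in (0:ℝ)..1,
        ((4 + 2*(u^β)^2)/(4 - (u^β)^2) + 6*(u^β)/(4 - (u^β)^2)) :=
      (intervalIntegral.integral_add hint_c hint_r).symm
    have e2 : ∫ u in (0:ℝ)..1,
        (1 + (3/2)*u^β + (3/4)*u^(β*2) + (3/8)*u^(β*3) + (3/8)*u^(β*4))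
        = 1 + (3/2)*(1/(β+1)) + (3/4)*(1/(β*2+1)) + (3/8)*(1/(β*3+1))
          + (3/8)*(1/(β*4+1)) := aux_poly_int β hβ2 1 (3/2) (3/4) (3/8) (3/8)
    rw [e1]
    have hmono : ∫ u in (0:ℝ)..1,
        ((4 + 2*(u^β)^2)/(4 - (u^β)^2) + 6*(u^β)/(4 - (u^β)^2))
        ≤ ∫ u in (0:ℝ)..1,
        (1 + (3/2)*u^β + (3/4)*u^(β*2) + (3/8)*u^(β*3) + (3/8)*u^(β*4)) := by
      apply intervalIntegral.integral_mono_on (by norm_num)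
      · exact hint_c.add hint_r
      · have : Continuous (fun u:ℝ =>
            1 + (3/2)*u^β + (3/4)*u^(β*2) + (3/8)*u^(β*3) + (3/8)*u^(β*4)) := by
          apply Continuous.add
          apply Continuous.add
          apply Continuous.add
          · exact continuous_const.add (continuous_const.mul hrpow_cont)
          · exact continuous_const.mul (Real.continuous_rpow_const (by linarith))
          · exact continuous_const.mul (Real.continuous_rpow_const (by linarith))
          · exact continuous_const.mul (Real.continuous_rpow_const (by linarith))
        exact this.intervalIntegrable 0 1
      · intro u hu
        have huu : u ∈ Set.uIcc (0:ℝ) 1 := by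
          rw [Set.uIcc_of_le (by norm_num : (0:ℝ) ≤ 1)]; exact hu
        obtain ⟨h0, h1⟩ := hubound u huu
        have hpow2 : u^(β*2) = (u^β)^2 := by
          rw [Real.rpow_mul hu.1, Real.rpow_two]
        have hpow3 : u^(β*3) = (u^β)^3 := by
          rw [Real.rpow_mul hu.1]
          rw [show ((3:ℝ)) = ((3:ℕ):ℝ) by norm_num, Real.rpow_natCast]
        have hpow4 : u^(β*4) = (u^β)^4 := by
          rw [Real.rpow_mul hu.1]
          rw [show ((4:ℝ)) = ((4:ℕ):ℝ) by norm_num, Real.rpow_natCast]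
        rw [hpow2, hpow3, hpow4, ← add_div, div_le_iff₀ (by nlinarith)]
        nlinarith [mul_nonneg (pow_nonneg h0 4)
          (mul_nonneg (by linarith : (0:ℝ) ≤ 1 - u^β) (by linarith : (0:ℝ) ≤ u^β + 2))]
    rw [e2] at hmono
    linarith [hmono]
  -- numeric bounds
  have h1 : (0:ℝ) < β+1 := by linarith
  have h2 : (0:ℝ) < β*2+1 := by linarith
  have h3 : (0:ℝ) < β*3+1 := by linarith
  have h4 : (0:ℝ) < β*4+1 := by linarith
  have hnum_low : (167:ℝ)/280 ≤ 1 - 3/2*(1/(β+1)) + 3/4*(1/(β*2+1)) - 3/8*(1/(β*3+1)) := by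
    have hkey : 1 - 3/2*(1/(β+1)) + 3/4*(1/(β*2+1)) - 3/8*(1/(β*3+1)) - 167/280
        = ((β-2)*(678*β^2 + 499*β + 101)) / (280*((β+1)*((β*2+1)*(β*3+1)))) := by
      field_simp
      ring
    have hnum : 0 ≤ (β-2)*(678*β^2 + 499*β + 101) := by
      apply mul_nonneg (by linarith)
      nlinarith [mul_nonneg hβnn hβnn]
    have hden2 : (0:ℝ) < 280*((β+1)*((β*2+1)*(β*3+1))) := by positivity
    have := div_nonneg hnum (le_of_lt hden2)
    linarith [this, hkey]
  have hnum_high : 1 + 3/2*(1/(β+1)) + 3/4*(1/(β*2+1)) + 3/8*(1/(β*3+1))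
      + 3/8*(1/(β*4+1)) ≤ 733/420 := by
    have hkey : 733/420 - (1 + 3/2*(1/(β+1)) + 3/4*(1/(β*2+1)) + 3/8*(1/(β*3+1))
        + 3/8*(1/(β*4+1)))
        = ((β-2)*(15024*β^3 + 19138*β^2 + 7581*β + 947))
          / (840*((β+1)*((β*2+1)*((β*3+1)*(β*4+1))))) := by
      field_simp
      ring
    have hnum : 0 ≤ (β-2)*(15024*β^3 + 19138*β^2 + 7581*β + 947) := by
      apply mul_nonneg (by linarith)
      nlinarith [mul_nonneg (mul_nonneg hβnn hβnn) hβnn, mul_nonneg hβnn hβnn]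
    have hden2 : (0:ℝ) < 840*((β+1)*((β*2+1)*((β*3+1)*(β*4+1)))) := by positivity
    have := div_nonneg hnum (le_of_lt hden2)
    linarith [this, hkey]
  exact ⟨Creal, Rreal, hC1, hR0, hnorm, by linarith, by linarith⟩

set_option maxHeartbeats 1000000 in
theorem stmt_3 (β : ℝ)
    (hβ : (Real.exp 1 + 2 - Real.sqrt 2 * (Real.exp 1 - 1)) /
        (Real.exp 1 * (Real.sqrt 2 - 1)) ≤ β)
    (p : ℂ → ℂ) (hp : DifferentiableOn ℂ p unitDisk) (hp0 : p 0 = 1)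
    (hsub : Subord (fun z => p z + (β : ℂ) * z * deriv p z)
      (fun z => (2 + 2 * z) / (2 - z))) :
    Subord p Complex.exp := by
  have hβ2 : 2 ≤ β := aux_beta β hβ
  obtain ⟨w, hw_diff, hw0, hw_lt, hw_eq⟩ := hsub
  have hopen : IsOpen unitDisk := Metric.isOpen_ball
  have hschwarz : ∀ ζ ∈ unitDisk, ‖(w ζ)‖ ≤ ‖ζ‖ := by
    intro ζ hζ
    have hmaps : Set.MapsTo w (Metric.ball 0 1) (Metric.ball 0 1) := by
      intro x hx
      rw [Metric.mem_ball, dist_zero_right]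
      exact hw_lt x hx
    exact Complex.norm_le_norm_of_mapsTo_ball hw_diff (hmaps.mono_right Metric.ball_subset_closedBall) hw0
      (by simpa [unitDisk, Metric.mem_ball, Complex.dist_eq] using hζ)
  have hPb : ∀ ζ ∈ unitDisk, ∀ σ : ℝ, ‖ζ‖ ≤ σ → σ ≤ 1 →
      ‖((p ζ + (β:ℂ) * ζ * deriv p ζ) - (((4 + 2*σ^2)/(4 - σ^2) : ℝ):ℂ))‖
        ≤ 6*σ/(4 - σ^2) := by
    intro ζ hζ σ hσ1 hσ2
    have heq := hw_eq ζ hζ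
    simp only at heq
    rw [heq]
    apply aux_mobius
    · exact le_trans (hschwarz ζ hζ) hσ1
    · exact hw_lt ζ hζ
    · exact hσ2
  have key : ∀ ζ ∈ unitDisk, 0 < (p ζ).re ∧ ‖(Complex.log (p ζ))‖ < 1 := by
    intro ζ hζ
    obtain ⟨C, R, hC1, hR0, hball, hlo, hhi⟩ := aux_main β hβ2 p hp hPb ζ hζ
    exact aux_region (p ζ) C R hC1 hR0 hball hlo hhi
  refine ⟨fun ζ => Complex.log (p ζ), ?_, ?_, ?_, ?_⟩
  · intro ζ hζ
    have h1 : DifferentiableAt ℂ p ζ := hp.differentiableAt (hopen.mem_nhds hζ)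
    have h2 : p ζ ∈ Complex.slitPlane := Complex.mem_slitPlane_iff.mpr (Or.inl (key ζ hζ).1)
    exact ((Complex.differentiableAt_log h2).comp ζ h1).differentiableWithinAt
  · show Complex.log (p 0) = 0
    rw [hp0, Complex.log_one]
  · intro ζ hζ
    exact (key ζ hζ).2
  · intro ζ hζ
    have hne : p ζ ≠ 0 := by
      intro h
      have h3 := (key ζ hζ).1
      rw [h] at h3
      simp at h3
    exact (Complex.exp_log hne).symm
end
end

section
/- Let n be a positive integer and let β be a real number with β ≥ e^(n+1) + e^n when n is odd and β ≥ e^(n+1) − e^n when n is even. If p ∈ H₁ and the function z ↦ 1 + β·(z·p′(z))^n is subordinate to z ↦ e^z on 𝔻, then p is subordinate to z ↦ e^z on 𝔻. -/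
open Complex

noncomputable section

set_option maxHeartbeats 1000000 in
theorem stmt_5 (n : ℕ) (hn : 0 < n) (β : ℝ)
    (hβodd : Odd n → Real.exp ((n : ℝ) + 1) + Real.exp (n : ℝ) ≤ β)
    (hβeven : Even n → Real.exp ((n : ℝ) + 1) - Real.exp (n : ℝ) ≤ β)
    (p : ℂ → ℂ) (hp : DifferentiableOn ℂ p unitDisk) (hp0 : p 0 = 1)
    (hsub : Subord (fun z => 1 + (β : ℂ) * (z * deriv p z) ^ n) Complex.exp) :
    Subord p Complex.exp := by
  obtain ⟨ω, hωd, hω0, hω1, hωeq⟩ := hsub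
  have hopen : IsOpen unitDisk := Metric.isOpen_ball
  have he : (2.7182818283 : ℝ) < Real.exp 1 := Real.exp_one_gt_d9
  have he2 : Real.exp 1 < 2.7182818286 := Real.exp_one_lt_d9
  set c : ℝ := 2 / (Real.exp 1 * (Real.exp 1 - 1)) with hc
  have hden : (0 : ℝ) < Real.exp 1 * (Real.exp 1 - 1) := by nlinarith
  have hc_pos : 0 < c := by positivity
  have hc_half : c < 1 / 2 := by
    rw [hc, div_lt_iff₀ hden]; nlinarith
  -- β bound
  have hexpn : Real.exp (n : ℝ) = Real.exp 1 ^ n := by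
    rw [show ((n : ℝ)) = (n : ℝ) * 1 by ring, Real.exp_nat_mul]
  have hβ : Real.exp 1 ^ n * (Real.exp 1 - 1) ≤ β := by
    have h1 : Real.exp ((n : ℝ) + 1) = Real.exp 1 ^ n * Real.exp 1 := by
      rw [Real.exp_add, hexpn]
    have hen : (0 : ℝ) < Real.exp 1 ^ n := by positivity
    rcases Nat.even_or_odd n with hev | hod
    · have := hβeven hev; rw [h1, hexpn] at this; nlinarith
    · have := hβodd hod; rw [h1, hexpn] at this; nlinarith
  -- key bound on z * p'(z)
  have hq : ∀ z ∈ unitDisk, ‖z * deriv p z‖ < c := by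
    intro z hz
    have heq := hωeq z hz
    have h2 : (β : ℂ) * (z * deriv p z) ^ n = Complex.exp (ω z) - 1 := by
      rw [← heq]; ring
    have hω1' : ‖ω z‖ < 1 := hω1 z hz
    have h3 : ‖Complex.exp (ω z) - 1‖ ≤ 2 * ‖ω z‖ := by
      have := Complex.norm_exp_sub_one_le (x := ω z) (by
        exact hω1'.le)
      simpa using this
    set x : ℝ := ‖z * deriv p z‖ with hxdef
    have hx0 : 0 ≤ x := norm_nonneg _
    have h4 : β * x ^ n < 2 := by
      have hn1 : ‖(β : ℂ) * (z * deriv p z) ^ n‖ = |β| * x ^ n := by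
        rw [norm_mul, norm_pow, Complex.norm_real, Real.norm_eq_abs]
      have hβpos : 0 < β := by nlinarith [pow_pos (by nlinarith : (0:ℝ) < Real.exp 1) n]
      calc β * x ^ n = ‖(β : ℂ) * (z * deriv p z) ^ n‖ := by
            rw [hn1, abs_of_pos hβpos]
        _ = ‖Complex.exp (ω z) - 1‖ := by rw [h2]
        _ ≤ 2 * ‖ω z‖ := h3
        _ < 2 := by linarith
    have h5 : (Real.exp 1 * x) ^ n < 2 / (Real.exp 1 - 1) := by
      rw [mul_pow, lt_div_iff₀ (by nlinarith : (0:ℝ) < Real.exp 1 - 1)]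
      nlinarith [mul_le_mul_of_nonneg_right hβ (pow_nonneg hx0 n),
        pow_nonneg hx0 n]
    have h6 : 2 / (Real.exp 1 - 1) ≤ (2 / (Real.exp 1 - 1)) ^ n := by
      refine le_self_pow₀ ?_ hn.ne'
      rw [le_div_iff₀ (by nlinarith : (0:ℝ) < Real.exp 1 - 1)]; nlinarith
    have h7 : Real.exp 1 * x < 2 / (Real.exp 1 - 1) := by
      refine lt_of_pow_lt_pow_left₀ n (div_nonneg (by norm_num) (by nlinarith)) (h5.trans_le h6)
    have h8 : Real.exp 1 * x * (Real.exp 1 - 1) < 2 :=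
      (lt_div_iff₀ (by nlinarith : (0:ℝ) < Real.exp 1 - 1)).mp h7
    rw [hc, lt_div_iff₀ hden]; nlinarith
  -- deriv p is differentiable on the disk
  have hderiv : DifferentiableOn ℂ (deriv p) unitDisk :=
    ((hp.analyticOnNhd hopen).deriv).differentiableOn
  -- maximum modulus: ‖p'‖ ≤ c on the disk
  have hd_bound : ∀ z ∈ unitDisk, ‖deriv p z‖ ≤ c := by
    intro z₀ hz₀
    by_contra hcon
    push_neg at hcon
    have hd0 : 0 < ‖deriv p z₀‖ := lt_trans hc_pos hcon
    have hz₀' : ‖z₀‖ < 1 := by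
      simpa [unitDisk, Metric.mem_ball] using hz₀
    have hmax : max ‖z₀‖ (c / ‖deriv p z₀‖) < 1 :=
      max_lt hz₀' (by rw [div_lt_one hd0]; exact hcon)
    obtain ⟨r, hr1, hr2⟩ := exists_between hmax
    have hrc : c / ‖deriv p z₀‖ < r := lt_of_le_of_lt (le_max_right _ _) hr1
    have hr0 : 0 < r := lt_trans (div_pos hc_pos hd0) hrc
    have hsubset : Metric.closedBall (0:ℂ) r ⊆ unitDisk :=
      Metric.closedBall_subset_ball hr2
    have hcl : closure (Metric.ball (0:ℂ) r) = Metric.closedBall (0:ℂ) r :=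
      closure_ball _ hr0.ne'
    have hdc : DiffContOnCl ℂ (deriv p) (Metric.ball (0:ℂ) r) := by
      apply DifferentiableOn.diffContOnCl
      rw [hcl]
      exact hderiv.mono hsubset
    have hle : ‖deriv p z₀‖ ≤ c / r := by
      refine Complex.norm_le_of_forall_mem_frontier_norm_le
        Metric.isBounded_ball hdc ?_ ?_
      · intro ζ hζ
        rw [frontier_ball _ hr0.ne'] at hζ
        have hζn : ‖ζ‖ = r := by simpa [Metric.mem_sphere, dist_zero_right] using hζ
        have hζd : ζ ∈ unitDisk := by
          simp [unitDisk, Metric.mem_ball, dist_zero_right, hζn, hr2]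
        have := hq ζ hζd
        rw [norm_mul, hζn] at this
        rw [le_div_iff₀ hr0, mul_comm]
        exact this.le
      · rw [hcl]
        simp only [Metric.mem_closedBall, dist_zero_right]
        exact le_trans (le_max_left _ _) hr1.le
    have : c / r < ‖deriv p z₀‖ := by
      rw [div_lt_iff₀ hr0]
      exact (div_lt_iff₀ hd0).mp hrc |>.trans_eq (mul_comm _ _)
    linarith
  -- integrate: ‖p z - 1‖ ≤ c * ‖z‖
  have h0mem : (0 : ℂ) ∈ unitDisk := by simp [unitDisk]
  have hp_bound : ∀ z ∈ unitDisk, ‖p z - 1‖ ≤ c * ‖z‖ := by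
    intro z hz
    have := Convex.norm_image_sub_le_of_norm_hasDerivWithin_le
      (f := p) (f' := deriv p) (s := unitDisk)
      (fun x hx => ((hp x hx).differentiableAt
        (hopen.mem_nhds hx)).hasDerivAt.hasDerivWithinAt)
      hd_bound (convex_ball 0 1) h0mem hz
    simpa [hp0] using this
  have hlt : ∀ z ∈ unitDisk, ‖p z - 1‖ < 1 / 2 := by
    intro z hz
    have hzn : ‖z‖ < 1 := by simpa [unitDisk, Metric.mem_ball] using hz
    have h := hp_bound z hz
    have h2 : c * ‖z‖ ≤ c * 1 := mul_le_mul_of_nonneg_left hzn.le hc_pos.le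
    linarith
  have hne : ∀ z ∈ unitDisk, p z ≠ 0 := by
    intro z hz h0
    have := hlt z hz
    rw [h0] at this
    simp at this
    linarith
  refine ⟨fun z => Complex.log (p z), ?_, ?_, ?_, ?_⟩
  · refine hp.clog ?_
    intro x hx
    have h1 := hlt x hx
    have h2 : |(p x - 1).re| ≤ ‖p x - 1‖ := by
      exact Complex.abs_re_le_norm _
    rw [Complex.mem_slitPlane_iff]
    left
    have h3 : (p x - 1).re = (p x).re - 1 := by simp
    rw [abs_le] at h2
    rw [h3] at h2
    linarith [h2.1]
  · simp [hp0]
  · intro z hz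
    have h1 : ‖p z - 1‖ ≤ 1 / 2 := (hlt z hz).le
    have h2 := Complex.norm_log_one_add_half_le_self (z := p z - 1) h1
    rw [add_sub_cancel] at h2
    have h3 := hp_bound z hz
    have hzn : ‖z‖ < 1 := by simpa [unitDisk, Metric.mem_ball] using hz
    calc ‖Complex.log (p z)‖ ≤ 3 / 2 * ‖p z - 1‖ := h2
      _ ≤ 3 / 2 * (c * ‖z‖) := by linarith
      _ < 1 := by nlinarith [norm_nonneg z]
  · intro z hz
    exact (Complex.exp_log (hne z hz)).symm
end
end

section
/- Let β be a real number with β ≥ e² + 1, and let p ∈ H₁. If the function z ↦ p(z) + β·z·p′(z) is subordinate to z ↦ e^z on 𝔻, then p is subordinate to z ↦ e^z on 𝔻. -/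
open Complex

noncomputable section

/-- Key integral estimate: if `p + β z p' = exp ∘ w` with `w` a Schwarz function, then
`‖p z - 1‖ ≤ 2/(β+1)` on the disk. -/
lemma key_bound_s7 (β : ℝ) (hβ : 1 ≤ β) (p w : ℂ → ℂ)
    (hp : DifferentiableOn ℂ p (Metric.ball 0 1))
    (hwd : DifferentiableOn ℂ w (Metric.ball 0 1))
    (hw : ∀ ζ ∈ Metric.ball (0:ℂ) 1, ‖w ζ‖ ≤ ‖ζ‖)
    (heq : ∀ ζ ∈ Metric.ball (0:ℂ) 1, p ζ + (β:ℂ) * ζ * deriv p ζ = Complex.exp (w ζ))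
    (z : ℂ) (hz : z ∈ Metric.ball (0:ℂ) 1) : ‖p z - 1‖ ≤ 2 / (β + 1) := by
  have hβ0 : (0:ℝ) < β := by linarith
  set c : ℝ := 1 / β with hc_def
  have hc : 0 < c := by positivity
  have hc1 : c ≤ 1 := by
    rw [hc_def, div_le_one hβ0]; linarith
  have hz1 : ‖z‖ < 1 := by simpa [Metric.mem_ball] using hz
  -- membership of t*z in the ball
  have hmem : ∀ t : ℝ, t ∈ Set.Icc (0:ℝ) 1 → (t:ℂ) * z ∈ Metric.ball (0:ℂ) 1 := by
    intro t ht
    rw [Metric.mem_ball, dist_zero_right, norm_mul, Complex.norm_real, Real.norm_eq_abs,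
      _root_.abs_of_nonneg ht.1]
    calc t * ‖z‖ ≤ 1 * ‖z‖ := by
          apply mul_le_mul_of_nonneg_right ht.2 (norm_nonneg z)
      _ < 1 := by simpa using hz1
  set F : ℝ → ℂ := fun t => ((t ^ c : ℝ) : ℂ) * p ((t:ℂ) * z) with hF_def
  set G : ℝ → ℂ := fun t => ((c * t ^ (c-1) : ℝ) : ℂ) * Complex.exp (w ((t:ℂ) * z)) with hG_def
  -- derivative
  have hderiv : ∀ t ∈ Set.Ioo (0:ℝ) 1, HasDerivAt F (G t) t := by
    intro t ht
    have ht0 : (0:ℝ) < t := ht.1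
    have hζ : (t:ℂ) * z ∈ Metric.ball (0:ℂ) 1 := hmem t ⟨ht.1.le, ht.2.le⟩
    have hpd : HasDerivAt p (deriv p ((t:ℂ)*z)) ((t:ℂ)*z) :=
      (hp.differentiableAt (Metric.isOpen_ball.mem_nhds hζ)).hasDerivAt
    have hinner : HasDerivAt (fun s : ℂ => s * z) z (t:ℂ) := hasDerivAt_mul_const z
    have h2 : HasDerivAt (fun s : ℝ => p ((s:ℂ) * z)) (deriv p ((t:ℂ)*z) * z) t := by
      exact (hpd.comp (t:ℂ) hinner).comp_ofReal
    have h1 : HasDerivAt (fun s : ℝ => ((s ^ c : ℝ) : ℂ)) ((c * t ^ (c-1) : ℝ) : ℂ) t := by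
      exact HasDerivAt.ofReal_comp (Real.hasDerivAt_rpow_const (Or.inl ht0.ne'))
    have hmul := h1.mul h2
    convert hmul using 1
    · rfl
    · rfl
    have hrw : Complex.exp (w ((t:ℂ)*z)) = p ((t:ℂ)*z) + (β:ℂ) * ((t:ℂ)*z) * deriv p ((t:ℂ)*z) :=
      (heq _ hζ).symm
    show ((c * t ^ (c-1) : ℝ) : ℂ) * Complex.exp (w ((t:ℂ) * z)) = _
    rw [hrw]
    have htc : (t:ℝ) ^ c = t ^ (c-1) * t := by
      rw [← Real.rpow_add_one ht0.ne' (c-1)]; ring_nf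
    have hcβ : c * β = 1 := by rw [hc_def]; field_simp
    have hcβ' : (c:ℂ) * (β:ℂ) = 1 := by exact_mod_cast congrArg Complex.ofReal hcβ
    push_cast [htc]
    linear_combination ((t ^ (c-1) : ℝ) : ℂ) * (t:ℂ) * z * deriv p ((t:ℂ)*z) * hcβ'
  -- continuity of F on [0,1]
  have hcont : ContinuousOn F (Set.Icc 0 1) := by
    apply ContinuousOn.mul
    · exact Complex.continuous_ofReal.comp_continuousOn
        (continuousOn_id.rpow_const (fun x _ => Or.inr hc.le))
    · exact hp.continuousOn.comp
        ((Complex.continuous_ofReal.mul continuous_const).continuousOn) hmem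
  -- integrability of the weight
  have hweightR : IntervalIntegrable (fun t : ℝ => c * t ^ (c-1)) MeasureTheory.volume 0 1 :=
    (intervalIntegral.intervalIntegrable_rpow' (by linarith)).const_mul c
  have hweight : IntervalIntegrable (fun t : ℝ => ((c * t ^ (c-1) : ℝ) : ℂ))
      MeasureTheory.volume 0 1 := ⟨hweightR.1.ofReal, hweightR.2.ofReal⟩
  -- continuity of the exp part
  have hexpc : ContinuousOn (fun t : ℝ => Complex.exp (w ((t:ℂ) * z))) (Set.uIcc 0 1) := by
    rw [Set.uIcc_of_le (zero_le_one)]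
    exact Complex.continuous_exp.comp_continuousOn
      (hwd.continuousOn.comp ((Complex.continuous_ofReal.mul continuous_const).continuousOn) hmem)
  have hint : IntervalIntegrable G MeasureTheory.volume 0 1 := hweight.mul_continuousOn hexpc
  -- FTC
  have hFTC : ∫ t in (0:ℝ)..1, G t = F 1 - F 0 :=
    intervalIntegral.integral_eq_sub_of_hasDeriv_right_of_le zero_le_one hcont
      (fun t ht => (hderiv t ht).hasDerivWithinAt) hint
  have hF1 : F 1 = p z := by
    simp [hF_def, Real.one_rpow]
  have hF0 : F 0 = 0 := by
    simp [hF_def, Real.zero_rpow hc.ne']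
  -- integral of the weight is 1
  have hwint : ∫ t in (0:ℝ)..1, (c * t ^ (c-1)) = 1 := by
    rw [intervalIntegral.integral_const_mul, integral_rpow (Or.inl (by linarith))]
    rw [Real.one_rpow, Real.zero_rpow (by linarith : c - 1 + 1 ≠ 0)]
    have : c - 1 + 1 = c := by ring
    rw [this]
    field_simp
    norm_num
  have hwintC : ∫ t in (0:ℝ)..1, ((c * t ^ (c-1) : ℝ) : ℂ) = 1 := by
    rw [intervalIntegral.integral_ofReal, hwint]; norm_num
  -- p z - 1 as an integral
  have hrep : p z - 1 = ∫ t in (0:ℝ)..1,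
      (G t - ((c * t ^ (c-1) : ℝ) : ℂ)) := by
    rw [intervalIntegral.integral_sub hint hweight, hFTC, hF1, hF0, hwintC]
    ring
  -- pointwise norm bound on (0,1]
  have hptwise : ∀ t ∈ Set.uIoc (0:ℝ) 1,
      ‖G t - ((c * t ^ (c-1) : ℝ) : ℂ)‖ ≤ 2 * c * t ^ c := by
    intro t ht
    rw [Set.uIoc_of_le zero_le_one] at ht
    have ht0 : 0 < t := ht.1
    have ht1 : t ≤ 1 := ht.2
    have hζ : (t:ℂ) * z ∈ Metric.ball (0:ℂ) 1 := hmem t ⟨ht0.le, ht1⟩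
    have hwnorm : ‖w ((t:ℂ) * z)‖ ≤ t := by
      calc ‖w ((t:ℂ) * z)‖ ≤ ‖(t:ℂ) * z‖ := hw _ hζ
        _ = t * ‖z‖ := by
            rw [norm_mul, Complex.norm_real, Real.norm_eq_abs, _root_.abs_of_nonneg ht0.le]
        _ ≤ t * 1 := mul_le_mul_of_nonneg_left hz1.le ht0.le
        _ = t := mul_one t
    have hexp1 : ‖Complex.exp (w ((t:ℂ) * z)) - 1‖ ≤ 2 * t := by
      have h1 : ‖w ((t:ℂ)*z)‖ ≤ 1 := hwnorm.trans ht1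
      calc ‖Complex.exp (w ((t:ℂ) * z)) - 1‖ ≤ 2 * ‖w ((t:ℂ)*z)‖ :=
            Complex.norm_exp_sub_one_le h1
        _ ≤ 2 * t := by
            have : ‖w ((t:ℂ)*z)‖ ≤ t := by exact hwnorm
            linarith
    have hwpos : 0 ≤ c * t ^ (c-1) := by positivity
    calc ‖G t - ((c * t ^ (c-1) : ℝ) : ℂ)‖
        = ‖((c * t ^ (c-1) : ℝ) : ℂ) * (Complex.exp (w ((t:ℂ)*z)) - 1)‖ := by
          rw [hG_def]; ring_nf
      _ = (c * t ^ (c-1)) * ‖Complex.exp (w ((t:ℂ)*z)) - 1‖ := by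
          rw [norm_mul, Complex.norm_real, Real.norm_eq_abs, _root_.abs_of_nonneg hwpos]
      _ ≤ (c * t ^ (c-1)) * (2 * t) := mul_le_mul_of_nonneg_left hexp1 hwpos
      _ = 2 * c * (t ^ (c-1) * t) := by ring
      _ = 2 * c * t ^ c := by rw [← Real.rpow_add_one ht0.ne' (c-1)]; ring_nf
  have hbound : IntervalIntegrable (fun t : ℝ => 2 * c * t ^ c)
      MeasureTheory.volume 0 1 :=
    (intervalIntegral.intervalIntegrable_rpow' (by linarith)).const_mul (2*c)
  have hnormle : ‖p z - 1‖ ≤ |∫ t in (0:ℝ)..1, 2 * c * t ^ c| := by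
    rw [hrep]
    apply intervalIntegral.norm_integral_le_abs_of_norm_le _ hbound
    filter_upwards [MeasureTheory.ae_restrict_mem measurableSet_uIoc] with t ht
    exact hptwise t ht
  have hcomp : ∫ t in (0:ℝ)..1, 2 * c * t ^ c = 2 * c / (c + 1) := by
    rw [intervalIntegral.integral_const_mul, integral_rpow (Or.inl (by linarith))]
    rw [Real.one_rpow, Real.zero_rpow (by linarith : c + 1 ≠ 0)]
    ring
  have hfinal : 2 * c / (c + 1) = 2 / (β + 1) := by
    rw [hc_def]
    field_simp
    ring
  rw [hcomp, hfinal] at hnormle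
  calc ‖p z - 1‖ ≤ |2 / (β + 1)| := hnormle
    _ = 2 / (β + 1) := abs_of_nonneg (by positivity)

theorem stmt_7 (β : ℝ) (hβ : Real.exp 1 ^ 2 + 1 ≤ β)
    (p : ℂ → ℂ) (hp : DifferentiableOn ℂ p unitDisk) (hp0 : p 0 = 1)
    (hsub : Subord (fun z => p z + (β : ℂ) * z * deriv p z) Complex.exp) :
    Subord p Complex.exp := by
  have he : (2.7182818283 : ℝ) < Real.exp 1 := Real.exp_one_gt_d9
  have hβ9 : (9 : ℝ) ≤ β + 1 := by nlinarith
  have hβ0 : (0:ℝ) < β := by nlinarith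
  have hβ1 : (1:ℝ) ≤ β := by nlinarith
  obtain ⟨w, hwd, hw0, hwlt, hweq⟩ := hsub
  have hball : unitDisk = Metric.ball (0:ℂ) 1 := rfl
  rw [hball] at hwd hwlt hweq hp
  -- Schwarz lemma
  have hS : ∀ ζ ∈ Metric.ball (0:ℂ) 1, ‖w ζ‖ ≤ ‖ζ‖ := by
    intro ζ hζ
    have hmaps : Set.MapsTo w (Metric.ball 0 1) (Metric.ball 0 1) := by
      intro x hx
      rw [Metric.mem_ball, dist_zero_right]
      exact hwlt x hx
    have := Complex.norm_le_norm_of_mapsTo_ball hwd (hmaps.mono_right Metric.ball_subset_closedBall) hw0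
      (by rw [← dist_zero_right]; exact hζ)
    simpa using this
  have heq : ∀ ζ ∈ Metric.ball (0:ℂ) 1,
      p ζ + (β:ℂ) * ζ * deriv p ζ = Complex.exp (w ζ) := fun ζ hζ => hweq ζ hζ
  have hkey : ∀ z ∈ Metric.ball (0:ℂ) 1, ‖p z - 1‖ ≤ 2 / (β + 1) :=
    key_bound_s7 β hβ1 p w hp hwd hS heq
  have hsmall : ∀ z ∈ Metric.ball (0:ℂ) 1, ‖p z - 1‖ ≤ 1/4 := by
    intro z hz
    have h1 := hkey z hz
    have h2 : 2 / (β + 1) ≤ 1/4 := by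
      rw [div_le_div_iff₀ (by linarith) (by norm_num)]
      linarith
    linarith
  -- positivity of real part, nonvanishing
  have hre : ∀ z ∈ Metric.ball (0:ℂ) 1, (3:ℝ)/4 ≤ (p z).re := by
    intro z hz
    have h1 := hsmall z hz
    have h2 : |(p z - 1).re| ≤ ‖p z - 1‖ := Complex.abs_re_le_norm _
    have h3 : (p z - 1).re = (p z).re - 1 := by simp
    rw [h3] at h2
    have := abs_le.mp h2
    linarith [this.1]
  have hne : ∀ z ∈ Metric.ball (0:ℂ) 1, p z ≠ 0 := by
    intro z hz h
    have := hre z hz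
    rw [h] at this
    simp at this
    linarith
  refine ⟨fun ζ => Complex.log (p ζ), ?_, ?_, ?_, ?_⟩
  · rw [hball]
    exact hp.clog (fun x hx => Complex.mem_slitPlane_iff.mpr (Or.inl (by linarith [hre x hx])))
  · show Complex.log (p 0) = 0
    rw [hp0, Complex.log_one]
  · intro z hz
    rw [hball] at hz
    show ‖Complex.log (p z)‖ < 1
    have h1 : p z = 1 + (p z - 1) := by ring
    rw [h1]
    calc ‖Complex.log (1 + (p z - 1))‖ ≤ 3/2 * ‖p z - 1‖ :=
          Complex.norm_log_one_add_half_le_self (by linarith [hsmall z hz])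
      _ ≤ 3/2 * (1/4) := by
          have := hsmall z hz
          linarith
      _ < 1 := by norm_num
  · intro z hz
    rw [hball] at hz
    show p z = Complex.exp (Complex.log (p z))
    exact (Complex.exp_log (hne z hz)).symm
end
end
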